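/- arXiv:2103.13551 — 8 statements merged into one kernel-verified Lean document; each statement's English description precedes it below -/
import Mathlib

section
/- Every sublacunary set is not an I_0-set: if {r_n}_{n∈ℕ} is a strictly increasing sequence of positive integers with lim_{n→∞} (log r_n)/n = 0, then E = {r_n : n ∈ ℕ} is not an I_0-set. -/
open Filter Topology

noncomputable section

/-- A trigonometric polynomial. -/
def IsTrigPoly (ψ : ℕ → ℂ) : Prop :=
  ∃ (k : ℕ) (c : Fin k → ℂ) (α : Fin k → ℝ), ∀ n : ℕ,
    ψ n = ∑ j, c j * Complex.exp (2 * Real.pi * Complex.I * (n : ℂ) * (α j : ℂ))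

/-- A Bohr almost periodic sequence: a uniform limit of trigonometric polynomials. -/
def IsBohrAP (ψ : ℕ → ℂ) : Prop :=
  ∀ ε : ℝ, 0 < ε → ∃ φ : ℕ → ℂ, IsTrigPoly φ ∧ ∀ n : ℕ, ‖ψ n - φ n‖ < ε

/-- `E` is an `I₀`-set. -/
def IsI0Set (E : Set ℕ) : Prop :=
  ∀ f : ℕ → ℂ, (∃ C : ℝ, ∀ n ∈ E, ‖f n‖ ≤ C) →
    ∃ ψ : ℕ → ℂ, IsBohrAP ψ ∧ ∀ n ∈ E, ψ n = f n

/-- `A` and `B` are separable by a Bohr rotation. -/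
def SeparableByBohr (A B : Set ℕ) : Prop :=
  ∃ (d : ℕ) (α : Fin d → AddCircle (1 : ℝ)),
    closure ((fun n : ℕ => n • α) '' A) ∩ closure ((fun n : ℕ => n • α) '' B) = ∅

/-- `R` is a set of Bohr recurrence. -/
def IsBohrRecurrence (R : Set ℕ) : Prop :=
  ∀ (d : ℕ) (α : Fin d → AddCircle (1 : ℝ)),
    (0 : Fin d → AddCircle (1 : ℝ)) ∈ closure ((fun n : ℕ => n • α) '' R)

/-- `r` is a lacunary sequence of positive integers. -/
def IsLacunarySeq (r : ℕ → ℕ) : Prop :=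
  (∀ n, 0 < r n) ∧ StrictMono r ∧ ∃ c : ℝ, 1 < c ∧ ∀ n, c ≤ (r (n + 1) : ℝ) / (r n : ℝ)

/-- `r` is a sublacunary sequence of positive integers. -/
def IsSublacunarySeq (r : ℕ → ℕ) : Prop :=
  (∀ n, 0 < r n) ∧ StrictMono r ∧
    Tendsto (fun n : ℕ => Real.log (r n) / (n : ℝ)) atTop (𝓝 0)

set_option maxHeartbeats 1000000

namespace SubNotI0

/-- distance to the nearest integer -/
noncomputable def dT (x : ℝ) : ℝ := |x - round x|

lemma dT_nonneg (x : ℝ) : 0 ≤ dT x := abs_nonneg _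

lemma dT_le_half (x : ℝ) : dT x ≤ 1/2 := abs_sub_round x

lemma dT_le_int (x : ℝ) (m : ℤ) : dT x ≤ |x - m| := by
  rcases eq_or_ne m (round x) with h | h
  · simp [dT, h]
  · have h0 : m - round x ≠ 0 := sub_ne_zero.2 h
    have h1 : (1:ℝ) ≤ |(m : ℝ) - (round x : ℝ)| := by
      have := Int.one_le_abs h0
      have : ((1:ℤ):ℝ) ≤ ((|m - round x| : ℤ) : ℝ) := by exact_mod_cast this
      simpa [Int.cast_abs] using this
    have h2 : dT x ≤ 1/2 := dT_le_half x
    have h3 : |(m:ℝ) - (round x:ℝ)| ≤ |(m:ℝ) - x| + |x - (round x:ℝ)| :=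
      abs_sub_le _ _ _
    have h4 : |(m:ℝ) - x| = |x - (m:ℝ)| := abs_sub_comm _ _
    have h5 : dT x = |x - round x| := rfl
    rw [h5]; rw [h4] at h3; linarith

lemma dT_le_abs (x : ℝ) : dT x ≤ |x| := by simpa using dT_le_int x 0

lemma dT_add_int (x : ℝ) (m : ℤ) : dT (x + m) = dT x := by
  apply le_antisymm
  · calc dT (x + m) ≤ |(x + m) - (round x + m : ℤ)| := dT_le_int _ _
      _ = |x - round x| := by push_cast; ring_nf
      _ = dT x := rfl
  · calc dT x ≤ |x - (round (x + (m:ℝ)) - m : ℤ)| := dT_le_int _ _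
      _ = |(x + m) - round (x + (m:ℝ))| := by push_cast; ring_nf
      _ = dT (x + m) := rfl

lemma dT_neg (x : ℝ) : dT (-x) = dT x := by
  apply le_antisymm
  · calc dT (-x) ≤ |(-x) - (-(round x) : ℤ)| := dT_le_int _ _
      _ = |x - round x| := by push_cast; rw [show -x - (-(round x:ℝ)) = -(x - round x) by ring, abs_neg]
      _ = dT x := rfl
  · calc dT x ≤ |x - (-(round (-x)) : ℤ)| := dT_le_int _ _
      _ = |(-x) - round (-x)| := by push_cast; rw [show x - (-(round (-x):ℝ)) = -(-x - round (-x)) by ring, abs_neg]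
      _ = dT (-x) := rfl

lemma dT_add_le (x y : ℝ) : dT (x + y) ≤ dT x + dT y := by
  calc dT (x + y) ≤ |(x + y) - (round x + round y : ℤ)| := dT_le_int _ _
    _ = |(x - round x) + (y - round y)| := by push_cast; ring_nf
    _ ≤ |x - round x| + |y - round y| := abs_add_le _ _
    _ = dT x + dT y := rfl

lemma dT_sub_le (x y : ℝ) : dT x ≤ dT y + dT (x - y) := by
  have := dT_add_le y (x - y)
  simpa using this

lemma dT_sub_le' (x y : ℝ) : dT (x - y) ≤ dT x + dT y := by
  have := dT_add_le x (-y)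
  rw [dT_neg] at this
  simpa [sub_eq_add_neg] using this


lemma abs_exp_I_sub_one (θ : ℝ) :
    ‖Complex.exp ((θ:ℂ) * Complex.I) - 1‖ ≤ |θ| := by
  have h1 : Complex.exp ((θ:ℂ) * Complex.I) = (Real.cos θ : ℂ) + (Real.sin θ : ℂ) * Complex.I := by
    rw [Complex.exp_mul_I, Complex.ofReal_cos, Complex.ofReal_sin]
  have h2 : Complex.exp ((θ:ℂ) * Complex.I) - 1
      = ((Real.cos θ - 1 : ℝ) : ℂ) + ((Real.sin θ : ℝ) : ℂ) * Complex.I := by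
    rw [h1]; push_cast; ring
  rw [h2]
  rw [Complex.norm_def, Complex.normSq_add_mul_I]
  have h3 : (Real.cos θ - 1)^2 + (Real.sin θ)^2 = 2 - 2 * Real.cos θ := by
    have := Real.sin_sq_add_cos_sq θ
    ring_nf
    nlinarith [this]
  have h4 : 2 - 2 * Real.cos θ = (2 * Real.sin (θ/2))^2 := by
    have hp := Real.sin_sq_add_cos_sq (θ/2)
    have hc := Real.cos_two_mul (θ/2)
    rw [show 2 * (θ/2) = θ by ring] at hc
    nlinarith [hp, hc]
  rw [h3, h4, Real.sqrt_sq_eq_abs]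
  have h5 : |2 * Real.sin (θ/2)| = 2 * |Real.sin (θ/2)| := by
    rw [abs_mul]; norm_num
  rw [h5]
  have h6 : |Real.sin (θ/2)| ≤ |θ/2| := Real.abs_sin_le_abs
  have h7 : |θ/2| = |θ|/2 := by rw [abs_div]; norm_num
  linarith [h6, h7 ▸ h6]

lemma abs_exp_sub_exp (a b : ℝ) :
    ‖Complex.exp (2 * Real.pi * Complex.I * (a:ℂ))
      - Complex.exp (2 * Real.pi * Complex.I * (b:ℂ))‖
      ≤ 2 * Real.pi * dT (a - b) := by
  set m : ℤ := round (a - b) with hm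
  set t : ℝ := a - b - m with ht
  have key : Complex.exp (2 * Real.pi * Complex.I * (a:ℂ))
      - Complex.exp (2 * Real.pi * Complex.I * (b:ℂ))
      = Complex.exp (2 * Real.pi * Complex.I * (b:ℂ))
        * (Complex.exp (((2 * Real.pi * t : ℝ):ℂ) * Complex.I) - 1) := by
    rw [mul_sub, mul_one, ← Complex.exp_add]
    congr 1
    have : ((2 * Real.pi * t : ℝ):ℂ) * Complex.I
        = 2 * Real.pi * Complex.I * ((a:ℂ) - b) - (m:ℂ) * (2 * Real.pi * Complex.I) := by
      push_cast [ht]; ring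
    rw [this]
    have hexp : Complex.exp (2 * Real.pi * Complex.I * (b:ℂ)
        + (2 * Real.pi * Complex.I * ((a:ℂ) - b) - (m:ℂ) * (2 * Real.pi * Complex.I)))
        = Complex.exp (2 * Real.pi * Complex.I * (a:ℂ))
          * Complex.exp (-((m:ℂ) * (2 * Real.pi * Complex.I))) := by
      rw [← Complex.exp_add]; congr 1; ring
    rw [hexp]
    have h1 : Complex.exp (-((m:ℂ) * (2 * Real.pi * Complex.I))) = 1 := by
      have := Complex.exp_int_mul_two_pi_mul_I (-m)
      push_cast at this
      convert this using 2
      ring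
    rw [h1, mul_one]
  have hb : ‖Complex.exp (2 * Real.pi * Complex.I * (b:ℂ))‖ = 1 := by
    rw [show 2 * (Real.pi:ℂ) * Complex.I * (b:ℂ) = ((2 * Real.pi * b : ℝ):ℂ) * Complex.I by
      push_cast; ring]
    exact Complex.norm_exp_ofReal_mul_I _
  rw [key, norm_mul, hb, one_mul]
  calc ‖Complex.exp (((2 * Real.pi * t : ℝ):ℂ) * Complex.I) - 1‖
      ≤ |2 * Real.pi * t| := abs_exp_I_sub_one _
    _ = 2 * Real.pi * |t| := by
        rw [abs_mul, abs_of_nonneg (by positivity : (0:ℝ) ≤ 2 * Real.pi)]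
    _ = 2 * Real.pi * dT (a - b) := by rw [ht, hm]; rfl


open Classical in
lemma sep_of_I0 (r : ℕ → ℕ) (hinj : Function.Injective r)
    (h0 : IsI0Set (Set.range r)) (s : ℕ → Bool) :
    ∃ (k : ℕ) (δ : ℝ) (α : Fin k → ℝ), 0 < δ ∧
      ∀ n n' : ℕ, s n ≠ s n' →
        ∃ j, δ ≤ dT ((r n : ℝ) * α j - (r n' : ℝ) * α j) := by
  set f : ℕ → ℂ := fun m => if (∃ n, r n = m ∧ s n = true) then 1 else 0 with hf
  have hbd : ∃ C : ℝ, ∀ n ∈ Set.range r, ‖f n‖ ≤ C := by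
    refine ⟨1, fun n _ => ?_⟩
    by_cases h : (∃ n', r n' = n ∧ s n' = true) <;> simp [hf, h]
  obtain ⟨ψ, hAP, hint⟩ := h0 f hbd
  obtain ⟨φ, ⟨k, c, α, hφ⟩, hclose⟩ := hAP (1/8) (by norm_num)
  have hfr : ∀ n, f (r n) = if s n = true then 1 else 0 := by
    intro n
    by_cases h : s n = true
    · have : (∃ n', r n' = r n ∧ s n' = true) := ⟨n, rfl, h⟩
      simp [hf, this, h]
    · have : ¬ (∃ n', r n' = r n ∧ s n' = true) := by
        rintro ⟨n', h1, h2⟩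
        exact h (hinj h1 ▸ h2)
      simp [hf, this, h]
  set M : ℝ := ∑ j, ‖c j‖ with hM
  have hM0 : 0 ≤ M := Finset.sum_nonneg fun j _ => norm_nonneg _
  refine ⟨k, 1/(3*Real.pi*(M+1)), α, by positivity, ?_⟩
  intro n n' hs
  by_contra hcon
  push_neg at hcon
  -- the interpolation gap
  have hgap : (3:ℝ)/4 ≤ ‖φ (r n) - φ (r n')‖ := by
    have h1 : ψ (r n) = f (r n) := hint _ ⟨n, rfl⟩
    have h2 : ψ (r n') = f (r n') := hint _ ⟨n', rfl⟩
    have h3 : ‖f (r n) - f (r n')‖ = 1 := by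
      rw [hfr, hfr]
      rcases Bool.eq_false_or_eq_true (s n) with h | h <;>
        rcases Bool.eq_false_or_eq_true (s n') with h' | h' <;>
          simp_all
    have h4 := hclose (r n)
    have h5 := hclose (r n')
    rw [h1] at h4
    rw [h2] at h5
    have h5' : ‖φ (r n') - f (r n')‖ < 1/8 := by
      rwa [norm_sub_rev] at h5
    have eqn : f (r n) - f (r n')
        = (f (r n) - φ (r n)) + ((φ (r n) - φ (r n')) + (φ (r n') - f (r n'))) := by
      ring
    have t1 := norm_add_le (f (r n) - φ (r n))
      ((φ (r n) - φ (r n')) + (φ (r n') - f (r n')))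
    have t2 := norm_add_le (φ (r n) - φ (r n')) (φ (r n') - f (r n'))
    rw [← eqn, h3] at t1
    linarith
  -- the trig poly bound
  have hub : ‖φ (r n) - φ (r n')‖
      ≤ 2 * Real.pi * ∑ j, ‖c j‖
        * dT ((r n : ℝ) * α j - (r n' : ℝ) * α j) := by
    rw [hφ, hφ, ← Finset.sum_sub_distrib]
    refine le_trans (norm_sum_le _ _) ?_
    rw [Finset.mul_sum]
    refine Finset.sum_le_sum fun j _ => ?_
    rw [← mul_sub, norm_mul]
    have hcast1 : 2 * (Real.pi:ℂ) * Complex.I * ((r n : ℕ) : ℂ) * (α j : ℂ)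
        = 2 * Real.pi * Complex.I * (((r n : ℝ) * α j : ℝ) : ℂ) := by push_cast; ring
    have hcast2 : 2 * (Real.pi:ℂ) * Complex.I * ((r n' : ℕ) : ℂ) * (α j : ℂ)
        = 2 * Real.pi * Complex.I * (((r n' : ℝ) * α j : ℝ) : ℂ) := by push_cast; ring
    rw [hcast1, hcast2]
    have := abs_exp_sub_exp ((r n : ℝ) * α j) ((r n' : ℝ) * α j)
    calc ‖c j‖ * ‖Complex.exp (2 * Real.pi * Complex.I * (((r n : ℝ) * α j : ℝ) : ℂ))
          - Complex.exp (2 * Real.pi * Complex.I * (((r n' : ℝ) * α j : ℝ) : ℂ))‖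
        ≤ ‖c j‖ * (2 * Real.pi * dT ((r n : ℝ) * α j - (r n' : ℝ) * α j)) := by
          exact mul_le_mul_of_nonneg_left this (norm_nonneg _)
      _ = 2 * Real.pi * (‖c j‖ * dT ((r n : ℝ) * α j - (r n' : ℝ) * α j)) := by
          ring
  -- combine
  have hsum : ∑ j, ‖c j‖ * dT ((r n : ℝ) * α j - (r n' : ℝ) * α j)
      ≤ M * (1/(3*Real.pi*(M+1))) := by
    rw [hM, Finset.sum_mul]
    refine Finset.sum_le_sum fun j _ => ?_
    exact mul_le_mul_of_nonneg_left (le_of_lt (hcon j)) (norm_nonneg _)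
  have hpi : (3:ℝ) < Real.pi := Real.pi_gt_three
  have hfin : 2 * Real.pi * (M * (1/(3*Real.pi*(M+1)))) ≤ 2/3 := by
    rw [div_eq_mul_inv, one_mul]
    have hpos : (0:ℝ) < 3*Real.pi*(M+1) := by positivity
    rw [show 2 * Real.pi * (M * (3*Real.pi*(M+1))⁻¹)
        = (2 * Real.pi * M) / (3*Real.pi*(M+1)) by ring]
    rw [div_le_iff₀ hpos]
    nlinarith [Real.pi_pos, hM0]
  have : ‖φ (r n) - φ (r n')‖ ≤ 2/3 := by
    calc ‖φ (r n) - φ (r n')‖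
        ≤ 2 * Real.pi * ∑ j, ‖c j‖
          * dT ((r n : ℝ) * α j - (r n' : ℝ) * α j) := hub
      _ ≤ 2 * Real.pi * (M * (1/(3*Real.pi*(M+1)))) := by
          exact mul_le_mul_of_nonneg_left hsum (by positivity)
      _ ≤ 2/3 := hfin
  linarith


/-- separability of a finite coloring -/
def SepN (r : ℕ → ℕ) (N k : ℕ) (δ : ℝ) (s : Fin N → Bool) : Prop :=
  ∃ α : Fin k → ℝ, ∀ i i' : Fin N, s i ≠ s i' →
    ∃ j, δ ≤ dT ((r i : ℝ) * α j - (r i' : ℝ) * α j)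

lemma floor_fract_lt (x : ℝ) (P : ℕ) (hP : 0 < P) : ⌊Int.fract x * P⌋.toNat < P := by
  have hPp : (0:ℝ) < P := by exact_mod_cast hP
  have hlt : Int.fract x * P < P := by
    nlinarith [Int.fract_lt_one x, Int.fract_nonneg x]
  have h1 : ⌊Int.fract x * P⌋ < (P : ℤ) := Int.floor_lt.2 (by push_cast; linarith)
  omega

/-- the nearest net point `⌊fract x * P⌋ / P` is within `1/P` of `x` modulo 1 -/
lemma fract_net_close (x : ℝ) (P : ℕ) (hP : 0 < P) :
    |Int.fract x - (⌊Int.fract x * P⌋.toNat : ℝ) / P| ≤ 1 / P := by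
  have hPp : (0:ℝ) < P := by exact_mod_cast hP
  have h0 : (0:ℤ) ≤ ⌊Int.fract x * P⌋ :=
    Int.floor_nonneg.2 (mul_nonneg (Int.fract_nonneg x) (le_of_lt hPp))
  have hto : ((⌊Int.fract x * P⌋.toNat : ℕ) : ℝ) = ((⌊Int.fract x * P⌋ : ℤ) : ℝ) := by
    have := Int.toNat_of_nonneg h0
    exact_mod_cast this
  have h1 : ((⌊Int.fract x * P⌋ : ℤ) : ℝ) ≤ Int.fract x * P := Int.floor_le _
  have h2 : Int.fract x * P < ((⌊Int.fract x * P⌋ : ℤ) : ℝ) + 1 := Int.lt_floor_add_one _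
  have e1 : ((⌊Int.fract x * P⌋ : ℤ) : ℝ) / P ≤ Int.fract x := by
    rw [div_le_iff₀ hPp]; linarith
  have e2 : Int.fract x ≤ ((⌊Int.fract x * P⌋ : ℤ) : ℝ) / P + 1 / P := by
    rw [show ((⌊Int.fract x * P⌋ : ℤ) : ℝ)/P + 1/P = (((⌊Int.fract x * P⌋ : ℤ) : ℝ) + 1)/P by
      ring]
    rw [le_div_iff₀ hPp]; linarith
  rw [hto, abs_le]
  constructor <;> [linarith; linarith]

/-- moving a frequency to the net changes `dT (n α - m α)` by at most `(n+m)/P` -/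
lemma dT_net (α : ℝ) (P : ℕ) (hP : 0 < P) (n m : ℕ) :
    dT ((n:ℝ) * α - (m:ℝ) * α)
      ≤ dT ((n:ℝ) * ((⌊Int.fract α * P⌋.toNat : ℝ)/P) - (m:ℝ) * ((⌊Int.fract α * P⌋.toNat : ℝ)/P))
        + ((n:ℝ) + m)/P := by
  set β : ℝ := (⌊Int.fract α * P⌋.toNat : ℝ)/P with hβ
  have hw : |Int.fract α - β| ≤ 1/P := fract_net_close α P hP
  have key : ∀ a : ℕ, dT ((a:ℝ) * (α - β)) ≤ (a:ℝ)/P := by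
    intro a
    have hsplit : (a:ℝ) * (α - β) = (a:ℝ) * (Int.fract α - β) + ((a * ⌊α⌋ : ℤ) : ℝ) := by
      have : Int.fract α = α - ⌊α⌋ := (Int.self_sub_floor α).symm ▸ rfl
      push_cast
      rw [this]; ring
    rw [hsplit, dT_add_int]
    calc dT ((a:ℝ) * (Int.fract α - β)) ≤ |(a:ℝ) * (Int.fract α - β)| := dT_le_abs _
      _ = (a:ℝ) * |Int.fract α - β| := by
          rw [abs_mul, abs_of_nonneg (by positivity : (0:ℝ) ≤ (a:ℕ))]
      _ ≤ (a:ℝ) * (1/P) := by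
          exact mul_le_mul_of_nonneg_left hw (by positivity)
      _ = (a:ℝ)/P := by ring
  have step1 : dT ((n:ℝ) * α - (m:ℝ) * α)
      ≤ dT ((n:ℝ) * β - (m:ℝ) * β)
        + dT (((n:ℝ) * α - (m:ℝ) * α) - ((n:ℝ) * β - (m:ℝ) * β)) :=
    dT_sub_le _ _
  have step2 : dT (((n:ℝ) * α - (m:ℝ) * α) - ((n:ℝ) * β - (m:ℝ) * β))
      ≤ dT ((n:ℝ) * (α - β)) + dT ((m:ℝ) * (α - β)) := by
    have : ((n:ℝ) * α - (m:ℝ) * α) - ((n:ℝ) * β - (m:ℝ) * β)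
        = (n:ℝ) * (α - β) - (m:ℝ) * (α - β) := by ring
    rw [this]
    exact dT_sub_le' _ _
  have kn := key n
  have km := key m
  have hq : ((n:ℝ) + m)/P = (n:ℝ)/P + (m:ℝ)/P := add_div _ _ _
  rw [hq]
  linarith [step1, step2, kn, km]

/-- points in the same cell at scale `Q` are `1/Q`-close mod 1 -/
lemma cell_close (a b : ℝ) (Q : ℕ) (hQ : 0 < Q)
    (h : ⌊Int.fract a * Q⌋.toNat = ⌊Int.fract b * Q⌋.toNat) :
    dT (a - b) < 1/Q := by
  have hQp : (0:ℝ) < Q := by exact_mod_cast hQ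
  have h0a : (0:ℤ) ≤ ⌊Int.fract a * Q⌋ :=
    Int.floor_nonneg.2 (mul_nonneg (Int.fract_nonneg a) (le_of_lt hQp))
  have h0b : (0:ℤ) ≤ ⌊Int.fract b * Q⌋ :=
    Int.floor_nonneg.2 (mul_nonneg (Int.fract_nonneg b) (le_of_lt hQp))
  have hfl : ⌊Int.fract a * Q⌋ = ⌊Int.fract b * Q⌋ := by omega
  have h1a := Int.floor_le (Int.fract a * Q)
  have h2a := Int.lt_floor_add_one (Int.fract a * Q)
  have h1b := Int.floor_le (Int.fract b * Q)
  have h2b := Int.lt_floor_add_one (Int.fract b * Q)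
  rw [hfl] at h1a h2a
  have hdiff : |Int.fract a - Int.fract b| < 1/Q := by
    rw [abs_lt]
    constructor
    · rw [neg_lt, show -(Int.fract a - Int.fract b) = Int.fract b - Int.fract a by ring,
        lt_div_iff₀ hQp] at *
      nlinarith
    · rw [lt_div_iff₀ hQp]
      nlinarith
  have hfra : Int.fract a = a - ⌊a⌋ := (Int.self_sub_floor a).symm
  have hfrb : Int.fract b = b - ⌊b⌋ := (Int.self_sub_floor b).symm
  have hsplit : a - b = (Int.fract a - Int.fract b) + ((⌊a⌋ - ⌊b⌋ : ℤ) : ℝ) := by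
    rw [hfra, hfrb]; push_cast; ring
  rw [hsplit, dT_add_int]
  calc dT (Int.fract a - Int.fract b) ≤ |Int.fract a - Int.fract b| := dT_le_abs _
    _ < 1/Q := hdiff

open Classical in
/-- fixed-frequency separated colorings are few -/
lemma card_sepFix_le (r : ℕ → ℕ) (N k Q : ℕ) (hQ : 0 < Q) (α : Fin k → ℝ) :
    (Finset.univ.filter (fun s : Fin N → Bool => ∀ i i' : Fin N, s i ≠ s i' →
        ∃ j, (1:ℝ)/Q ≤ dT ((r i : ℝ) * α j - (r i' : ℝ) * α j))).card
      ≤ 2^(Q^k) := by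
  classical
  set g : Fin N → (Fin k → Fin Q) := fun i j =>
    ⟨⌊Int.fract ((r i : ℝ) * α j) * Q⌋.toNat, floor_fract_lt _ _ hQ⟩ with hg
  have key : ∀ s : Fin N → Bool, (∀ i i' : Fin N, s i ≠ s i' →
      ∃ j, (1:ℝ)/Q ≤ dT ((r i : ℝ) * α j - (r i' : ℝ) * α j)) →
      ∀ i i', g i = g i' → s i = s i' := by
    intro s hs i i' hgi
    by_contra hne
    obtain ⟨j, hj⟩ := hs i i' hne
    have hcomp : (⌊Int.fract ((r i : ℝ) * α j) * Q⌋).toNat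
        = (⌊Int.fract ((r i' : ℝ) * α j) * Q⌋).toNat := by
      have := congrFun hgi j
      simpa [hg] using congrArg Fin.val this
    have := cell_close ((r i : ℝ) * α j) ((r i' : ℝ) * α j) Q hQ hcomp
    linarith
  have hinj : Set.InjOn
      (fun s : Fin N → Bool => fun cc : Fin k → Fin Q => decide (∃ i, g i = cc ∧ s i = true))
      ↑(Finset.univ.filter (fun s : Fin N → Bool => ∀ i i' : Fin N, s i ≠ s i' →
        ∃ j, (1:ℝ)/Q ≤ dT ((r i : ℝ) * α j - (r i' : ℝ) * α j))) := by
    intro s hs s' hs' heq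
    simp only [Finset.coe_filter, Set.mem_setOf_eq, Finset.mem_univ, true_and] at hs hs'
    have hrec : ∀ (s : Fin N → Bool), (∀ i i' : Fin N, s i ≠ s i' →
        ∃ j, (1:ℝ)/Q ≤ dT ((r i : ℝ) * α j - (r i' : ℝ) * α j)) →
        ∀ i, s i = decide (∃ i', g i' = g i ∧ s i' = true) := by
      intro s hsep i
      by_cases h : s i = true
      · simp only [h]
        symm
        simp only [decide_eq_true_eq]
        exact ⟨i, rfl, h⟩
      · have h' : s i = false := by simpa using h
        rw [h']
        symm
        simp only [decide_eq_false_iff_not]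
        rintro ⟨i', hgi, hsi'⟩
        have := key s hsep i' i hgi
        rw [this, h'] at hsi'
        exact Bool.false_ne_true hsi'
    funext i
    rw [hrec s hs i, hrec s' hs' i]
    have := congrFun heq (g i)
    simp only at this
    rw [this]
  have hcard := Finset.card_le_card_of_injOn _ (fun s hs => Finset.mem_coe.1 (by
      simp only [Finset.coe_univ, Set.mem_univ, Finset.mem_coe, Finset.mem_univ]
      exact Finset.mem_univ _)) hinj
  calc (Finset.univ.filter _).card
      ≤ (Finset.univ : Finset ((Fin k → Fin Q) → Bool)).card := hcard
    _ = 2^(Q^k) := by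
        simp [Finset.card_univ, Fintype.card_fun]

open Classical in
/-- the main counting bound: separable colorings of the first `N` points are few -/
lemma card_sepN_le (r : ℕ → ℕ) (N k q : ℕ) (hmono : ∀ i : Fin N, r i ≤ r N)
    (hpos : 0 < r N) :
    (Finset.univ.filter (fun s : Fin N → Bool => SepN r N k (1/(q+1:ℝ)) s)).card
      ≤ (4*(q+1)*r N)^k * 2^((2*(q+1))^k) := by
  classical
  set P : ℕ := 4*(q+1)*r N with hPdef
  have hP : 0 < P := by
    have h1 : 0 < 4*(q+1) := by omega
    exact Nat.mul_pos h1 hpos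
  set Q : ℕ := 2*(q+1) with hQdef
  have hQ : 0 < Q := by omega
  have hPp : (0:ℝ) < P := by exact_mod_cast hP
  have hQp : (0:ℝ) < Q := by exact_mod_cast hQ
  -- step 1: pass to net frequencies
  have step1 : ∀ s : Fin N → Bool, SepN r N k (1/(q+1:ℝ)) s →
      ∃ t : Fin k → Fin P, ∀ i i' : Fin N, s i ≠ s i' →
        ∃ j, (1:ℝ)/Q ≤ dT ((r i : ℝ) * (((t j : ℕ):ℝ)/P) - (r i' : ℝ) * (((t j : ℕ):ℝ)/P)) := by
    intro s hs
    obtain ⟨α, hα⟩ := hs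
    refine ⟨fun j => ⟨⌊Int.fract (α j) * P⌋.toNat, floor_fract_lt _ _ hP⟩, ?_⟩
    intro i i' hne
    obtain ⟨j, hj⟩ := hα i i' hne
    refine ⟨j, ?_⟩
    have hnet := dT_net (α j) P hP (r i) (r i')
    have hbound : ((r i : ℝ) + (r i'))/P ≤ 1/Q := by
      have h1 : (r i : ℝ) ≤ r N := by exact_mod_cast hmono i
      have h2 : (r i' : ℝ) ≤ r N := by exact_mod_cast hmono i'
      have hform : (P:ℝ) = 4*(q+1)*(r N : ℝ) := by
        rw [hPdef]; push_cast; ring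
      have hform2 : (Q:ℝ) = 2*(q+1) := by rw [hQdef]; push_cast; ring
      rw [div_le_div_iff₀ hPp hQp, hform, hform2]
      have hrN : (0:ℝ) < r N := by exact_mod_cast hpos
      nlinarith
    have hdelta : (1:ℝ)/(q+1) - 1/Q = 1/Q := by
      have hform2 : (Q:ℝ) = 2*(q+1) := by rw [hQdef]; push_cast; ring
      rw [hform2]
      have : (0:ℝ) < (q:ℝ)+1 := by positivity
      field_simp
      ring
    have := le_trans hj hnet
    linarith
  -- step 2: biUnion bound
  have hsub : (Finset.univ.filter (fun s : Fin N → Bool => SepN r N k (1/(q+1:ℝ)) s))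
      ⊆ (Finset.univ : Finset (Fin k → Fin P)).biUnion (fun t =>
          Finset.univ.filter (fun s : Fin N → Bool => ∀ i i' : Fin N, s i ≠ s i' →
            ∃ j, (1:ℝ)/Q ≤ dT ((r i : ℝ) * (((t j : ℕ):ℝ)/P) - (r i' : ℝ) * (((t j : ℕ):ℝ)/P)))) := by
    intro s hs
    rw [Finset.mem_filter] at hs
    obtain ⟨t, ht⟩ := step1 s hs.2
    rw [Finset.mem_biUnion]
    exact ⟨t, Finset.mem_univ _, Finset.mem_filter.2 ⟨Finset.mem_univ _, ht⟩⟩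
  calc (Finset.univ.filter (fun s : Fin N → Bool => SepN r N k (1/(q+1:ℝ)) s)).card
      ≤ ((Finset.univ : Finset (Fin k → Fin P)).biUnion (fun t =>
          Finset.univ.filter (fun s : Fin N → Bool => ∀ i i' : Fin N, s i ≠ s i' →
            ∃ j, (1:ℝ)/Q ≤ dT ((r i : ℝ) * (((t j : ℕ):ℝ)/P)
              - (r i' : ℝ) * (((t j : ℕ):ℝ)/P))))).card :=
        Finset.card_le_card hsub
    _ ≤ ∑ t : Fin k → Fin P, (Finset.univ.filter (fun s : Fin N → Bool =>
          ∀ i i' : Fin N, s i ≠ s i' →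
            ∃ j, (1:ℝ)/Q ≤ dT ((r i : ℝ) * (((t j : ℕ):ℝ)/P)
              - (r i' : ℝ) * (((t j : ℕ):ℝ)/P)))).card :=
        Finset.card_biUnion_le
    _ ≤ ∑ _t : Fin k → Fin P, 2^(Q^k) := by
        refine Finset.sum_le_sum fun t _ => ?_
        exact card_sepFix_le r N k Q hQ (fun j => ((t j : ℕ):ℝ)/P)
    _ = (Fintype.card (Fin k → Fin P)) * 2^(Q^k) := by
        rw [Finset.sum_const, Finset.card_univ, smul_eq_mul]
    _ = P^k * 2^(Q^k) := by
        rw [Fintype.card_fun]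
        simp
    _ = (4*(q+1)*r N)^k * 2^((2*(q+1))^k) := by rw [hPdef, hQdef]


lemma exists_big_N (r : ℕ → ℕ) (hpos : ∀ n, 0 < r n)
    (hsub : Tendsto (fun n : ℕ => Real.log (r n) / n) atTop (𝓝 0))
    (k q N₀ : ℕ) :
    ∃ N : ℕ, N₀ < N ∧ ((4*(q+1)*r N)^k * 2^((2*(q+1))^k) : ℕ) < 2^(N - N₀) := by
  have hl2 : 0 < Real.log 2 := Real.log_pos (by norm_num)
  set ε : ℝ := Real.log 2 / (4*(k+1)) with hεdef
  have hε : 0 < ε := by positivity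
  have e1 : ∀ᶠ N : ℕ in atTop, Real.log (r N) / N < ε := hsub.eventually (gt_mem_nhds hε)
  obtain ⟨N₁, h₁⟩ := e1.exists_forall_of_atTop
  set a : ℝ := 4*(q+1) with hadef
  have ha1 : (1:ℝ) ≤ a := by rw [hadef]; push_cast; nlinarith [(Nat.cast_nonneg q : (0:ℝ) ≤ q)]
  have ha : (0:ℝ) < a := lt_of_lt_of_le one_pos ha1
  set E : ℕ := (2*(q+1))^k with hEdef
  set A' : ℝ := k * Real.log a + (E:ℝ) * Real.log 2 + (N₀:ℝ) * Real.log 2 with hA'def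
  obtain ⟨N₂, hN₂⟩ := exists_nat_gt (A' / ((1/2) * Real.log 2))
  set N : ℕ := max (max N₁ N₂) (N₀+1) with hNdef
  have hNN₁ : N₁ ≤ N := le_trans (le_max_left _ _) (le_max_left _ _)
  have hNN₂ : N₂ ≤ N := le_trans (le_max_right _ _) (le_max_left _ _)
  have hNN₀ : N₀ + 1 ≤ N := le_max_right _ _
  have hN0 : 0 < N := lt_of_lt_of_le (Nat.succ_pos _) hNN₀
  have hNp : (0:ℝ) < N := by exact_mod_cast hN0
  refine ⟨N, by omega, ?_⟩
  set R : ℝ := (r N : ℝ) with hRdef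
  have hR : (0:ℝ) < R := by rw [hRdef]; exact_mod_cast hpos N
  -- log r N < ε N
  have hlog : Real.log R < ε * N := by
    have := h₁ N hNN₁
    rw [div_lt_iff₀ hNp] at this
    rw [hRdef]; linarith
  -- main real inequality on logs
  have hkε : (k:ℝ) * ε ≤ Real.log 2 / 4 := by
    rw [hεdef, mul_div_assoc']
    rw [div_le_div_iff₀ (by positivity) (by norm_num : (0:ℝ) < 4)]
    have hk0 : (0:ℝ) ≤ k := Nat.cast_nonneg k
    nlinarith [hl2.le]
  have hA'N : A' < (1/2) * Real.log 2 * N := by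
    have h2 : A' / ((1/2) * Real.log 2) < (N:ℝ) := by
      have : (N₂:ℝ) ≤ N := by exact_mod_cast hNN₂
      linarith
    rw [div_lt_iff₀ (by positivity)] at h2
    linarith
  -- assemble the log inequality
  have hlogsum : (k:ℝ) * Real.log (a * R) + (E:ℝ) * Real.log 2 + (N₀:ℝ) * Real.log 2
      < (N:ℝ) * Real.log 2 := by
    have hsplit : Real.log (a * R) = Real.log a + Real.log R :=
      Real.log_mul (ne_of_gt ha) (ne_of_gt hR)
    have hklog : (k:ℝ) * Real.log R ≤ (Real.log 2 / 4) * N := by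
      have hk0 : (0:ℝ) ≤ k := Nat.cast_nonneg k
      have h1 : (k:ℝ) * Real.log R ≤ (k:ℝ) * (ε * N) := by
        rcases eq_or_lt_of_le hk0 with h | h
        · rw [← h]; simp
        · exact le_of_lt (mul_lt_mul_of_pos_left hlog h)
      have h2 : (k:ℝ) * (ε * N) = ((k:ℝ) * ε) * N := by ring
      have h3 : ((k:ℝ) * ε) * N ≤ (Real.log 2 / 4) * N :=
        mul_le_mul_of_nonneg_right hkε (le_of_lt hNp)
      linarith
    rw [hsplit]
    have expand : (k:ℝ) * (Real.log a + Real.log R) + (E:ℝ) * Real.log 2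
        + (N₀:ℝ) * Real.log 2
        = A' + (k:ℝ) * Real.log R := by rw [hA'def]; ring
    rw [expand]
    nlinarith [hA'N, hklog, hNp, hl2]
  -- exponentiate
  have hexp : (a * R)^k * (2:ℝ)^E * 2^(N₀:ℕ) < 2^(N:ℕ) := by
    have hL : (0:ℝ) < (a * R)^k * (2:ℝ)^E * 2^(N₀:ℕ) := by positivity
    have hR2 : (0:ℝ) < (2:ℝ)^(N:ℕ) := by positivity
    have hlt : Real.log ((a * R)^k * (2:ℝ)^E * 2^(N₀:ℕ)) < Real.log (2^(N:ℕ)) := by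
      calc Real.log ((a * R)^k * (2:ℝ)^E * 2^(N₀:ℕ))
          = (k:ℝ) * Real.log (a*R) + (E:ℝ) * Real.log 2 + (N₀:ℝ) * Real.log 2 := by
            have l1 : Real.log ((a*R)^k) = (k:ℝ) * Real.log (a*R) := Real.log_pow _ _
            have l2 : Real.log ((2:ℝ)^E) = (E:ℝ) * Real.log 2 := Real.log_pow _ _
            have l3 : Real.log ((2:ℝ)^(N₀:ℕ)) = (N₀:ℝ) * Real.log 2 := Real.log_pow _ _
            rw [Real.log_mul (by positivity) (by positivity),
              Real.log_mul (by positivity) (by positivity), l1, l2, l3]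
        _ < (N:ℝ) * Real.log 2 := hlogsum
        _ = Real.log (2^(N:ℕ)) := (Real.log_pow _ _).symm
    have := Real.exp_lt_exp.2 hlt
    rwa [Real.exp_log hL, Real.exp_log hR2] at this
  -- convert to ℕ
  have hcast : (((4*(q+1)*r N)^k * 2^E : ℕ) : ℝ) * 2^(N₀:ℕ) < ((2^(N:ℕ) : ℕ) : ℝ) := by
    push_cast
    have heq : (4*((q:ℝ)+1)*((r N : ℕ):ℝ)) = a * R := by rw [hadef, hRdef]
    rw [heq]
    exact hexp
  have hfinal : ((4*(q+1)*r N)^k * 2^E : ℕ) * 2^(N₀:ℕ) < 2^(N:ℕ) := by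
    exact_mod_cast hcast
  have hsubpow : (2:ℕ)^(N - N₀) * 2^(N₀:ℕ) = 2^(N:ℕ) := by
    rw [← pow_add]
    congr 1
    omega
  have h2pos : 0 < (2:ℕ)^(N₀:ℕ) := Nat.pow_pos (by norm_num)
  rw [← hsubpow] at hfinal
  exact lt_of_mul_lt_mul_right hfinal (le_of_lt h2pos)

open Classical in
lemma exists_extension (r : ℕ → ℕ) (hmono : Monotone r) (hpos : ∀ n, 0 < r n)
    (hsub : Tendsto (fun n : ℕ => Real.log (r n) / n) atTop (𝓝 0))
    (k q N₀ : ℕ) (p : ℕ → Bool) :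
    ∃ N : ℕ, N₀ < N ∧ ∃ s : ℕ → Bool, (∀ i, i < N₀ → s i = p i) ∧
      ¬ SepN r N k (1/(q+1:ℝ)) (fun i : Fin N => s i) := by
  obtain ⟨N, hNN₀, hcount⟩ := exists_big_N r hpos hsub k q N₀
  refine ⟨N, hNN₀, ?_⟩
  by_contra hcon
  push_neg at hcon
  -- every extension of the prefix is separable
  have hext : ∀ t : Fin (N - N₀) → Bool,
      SepN r N k (1/(q+1:ℝ)) (fun i : Fin N =>
        if h : (i:ℕ) < N₀ then p i else t ⟨(i:ℕ) - N₀, by omega⟩) := by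
    intro t
    set sfull : ℕ → Bool := fun n =>
      if hn : n < N then
        (if h : n < N₀ then p n else if h2 : n - N₀ < N - N₀ then t ⟨n - N₀, h2⟩ else false)
      else false with hsfull
    have hagree : ∀ i, i < N₀ → sfull i = p i := by
      intro i hi
      simp only [hsfull]
      rw [dif_pos (by omega), dif_pos hi]
    have := hcon sfull hagree
    have heq : (fun i : Fin N => sfull i) = (fun i : Fin N =>
        if h : (i:ℕ) < N₀ then p i else t ⟨(i:ℕ) - N₀, by omega⟩) := by
      funext i
      simp only [hsfull]
      rw [dif_pos i.isLt]
      by_cases h : (i:ℕ) < N₀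
      · rw [dif_pos h, dif_pos h]
      · rw [dif_neg h, dif_neg h, dif_pos (by omega)]
    rwa [heq] at this
  -- injection into the separable set
  have hinj : Set.InjOn
      (fun t : Fin (N - N₀) → Bool => (fun i : Fin N =>
        if h : (i:ℕ) < N₀ then p i else t ⟨(i:ℕ) - N₀, by omega⟩))
      ↑(Finset.univ : Finset (Fin (N - N₀) → Bool)) := by
    intro t _ t' _ heq
    funext j
    have hj : N₀ + (j:ℕ) < N := by omega
    have := congrFun heq ⟨N₀ + (j:ℕ), hj⟩
    simp only at this
    rw [dif_neg (by omega), dif_neg (by omega)] at this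
    have hidx : (⟨N₀ + (j:ℕ) - N₀, by omega⟩ : Fin (N - N₀)) = j := by
      apply Fin.ext
      simp only
      omega
    rwa [hidx] at this
  have hmaps : ∀ t ∈ (Finset.univ : Finset (Fin (N - N₀) → Bool)),
      (fun i : Fin N => if h : (i:ℕ) < N₀ then p i else t ⟨(i:ℕ) - N₀, by omega⟩)
        ∈ Finset.univ.filter (fun s : Fin N → Bool => SepN r N k (1/(q+1:ℝ)) s) := by
    intro t _
    exact Finset.mem_filter.2 ⟨Finset.mem_univ _, hext t⟩
  have hcard := Finset.card_le_card_of_injOn _ hmaps hinj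
  have hcard1 : (Finset.univ : Finset (Fin (N - N₀) → Bool)).card = 2^(N - N₀) := by
    simp [Finset.card_univ, Fintype.card_fun]
  have hcard2 := card_sepN_le r N k q
    (fun i => hmono (le_of_lt i.isLt)) (hpos N)
  rw [hcard1] at hcard
  exact absurd (lt_of_le_of_lt (le_trans hcard hcard2) hcount) (lt_irrefl _)

section Chain

variable (r : ℕ → ℕ) (hmono : Monotone r) (hpos : ∀ n, 0 < r n)
  (hsub : Tendsto (fun n : ℕ => Real.log (r n) / n) atTop (𝓝 0))

noncomputable def chain : ℕ → ℕ × (ℕ → Bool)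
  | 0 => (0, fun _ => false)
  | m+1 =>
    let st := chain m
    let h := exists_extension r hmono hpos hsub (Nat.unpair m).1 (Nat.unpair m).2
      (max st.1 m) st.2
    (Classical.choose h, Classical.choose (Classical.choose_spec h).2)

lemma chain_spec (m : ℕ) :
    max (chain r hmono hpos hsub m).1 m < (chain r hmono hpos hsub (m+1)).1 ∧
    (∀ i, i < max (chain r hmono hpos hsub m).1 m →
      (chain r hmono hpos hsub (m+1)).2 i = (chain r hmono hpos hsub m).2 i) ∧
    ¬ SepN r (chain r hmono hpos hsub (m+1)).1 (Nat.unpair m).1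
      (1/((Nat.unpair m).2+1:ℝ))
      (fun i : Fin (chain r hmono hpos hsub (m+1)).1 =>
        (chain r hmono hpos hsub (m+1)).2 i) := by
  have h := exists_extension r hmono hpos hsub (Nat.unpair m).1 (Nat.unpair m).2
    (max (chain r hmono hpos hsub m).1 m) (chain r hmono hpos hsub m).2
  have hfst : (chain r hmono hpos hsub (m+1)).1 = Classical.choose h := rfl
  have hsnd : (chain r hmono hpos hsub (m+1)).2
      = Classical.choose (Classical.choose_spec h).2 := rfl
  have h1 := (Classical.choose_spec h).1
  have h2 := Classical.choose_spec (Classical.choose_spec h).2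
  refine ⟨?_, ?_, ?_⟩
  · rw [hfst]; exact h1
  · intro i hi
    rw [hsnd]
    exact h2.1 i hi
  · have := h2.2
    rw [show (fun i : Fin (chain r hmono hpos hsub (m+1)).1 =>
        (chain r hmono hpos hsub (m+1)).2 i)
      = (fun i : Fin (Classical.choose h) =>
        Classical.choose (Classical.choose_spec h).2 i) from rfl]
    exact this

lemma chain_fst_ge (m : ℕ) : m ≤ (chain r hmono hpos hsub m).1 := by
  induction m with
  | zero => exact Nat.zero_le _
  | succ m ih =>
    have := (chain_spec r hmono hpos hsub m).1
    omega

lemma chain_fst_mono {a b : ℕ} (hab : a ≤ b) :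
    (chain r hmono hpos hsub a).1 ≤ (chain r hmono hpos hsub b).1 := by
  induction b with
  | zero =>
    have : a = 0 := by omega
    rw [this]
  | succ b ih =>
    rcases Nat.lt_or_ge a (b+1) with h | h
    · have h1 := ih (by omega)
      have h2 := (chain_spec r hmono hpos hsub b).1
      have h3 : (chain r hmono hpos hsub b).1 < (chain r hmono hpos hsub (b+1)).1 :=
        lt_of_le_of_lt (le_max_left _ _) h2
      omega
    · have : a = b + 1 := by omega
      rw [this]

lemma chain_agree {a b : ℕ} (hab : a ≤ b) :
    ∀ i, i < (chain r hmono hpos hsub a).1 →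
      (chain r hmono hpos hsub b).2 i = (chain r hmono hpos hsub a).2 i := by
  induction b with
  | zero =>
    intro i hi
    have : a = 0 := by omega
    rw [this]
  | succ b ih =>
    intro i hi
    rcases Nat.lt_or_ge a (b+1) with h | h
    · have hab' : a ≤ b := by omega
      have h1 := (chain_spec r hmono hpos hsub b).2.1 i
        (by
          have := chain_fst_mono r hmono hpos hsub hab'
          omega)
      rw [h1]
      exact ih hab' i hi
    · have : a = b + 1 := by omega
      rw [this]

/-- the limit coloring -/
noncomputable def slim : ℕ → Bool := fun n => (chain r hmono hpos hsub (n+1)).2 n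

lemma slim_agree (m : ℕ) :
    ∀ i, i < (chain r hmono hpos hsub m).1 →
      slim r hmono hpos hsub i = (chain r hmono hpos hsub m).2 i := by
  intro i hi
  have hkey : i < (chain r hmono hpos hsub (i+1)).1 := by
    have := chain_fst_ge r hmono hpos hsub (i+1)
    omega
  rcases Nat.le_total m (i+1) with h | h
  · exact chain_agree r hmono hpos hsub h i hi
  · exact (chain_agree r hmono hpos hsub h i hkey).symm

end Chain

end SubNotI0

/-- Sublacunary sets are not `I₀`-sets. -/
theorem sublacunary_not_I0 (r : ℕ → ℕ) (hr : IsSublacunarySeq r) :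
    ¬ IsI0Set (Set.range r) := by
  obtain ⟨hpos, hsm, hsub⟩ := hr
  intro h0
  have hmono : Monotone r := hsm.monotone
  set s : ℕ → Bool := SubNotI0.slim r hmono hpos hsub with hs
  obtain ⟨k, δ, α, hδ, hsep⟩ := SubNotI0.sep_of_I0 r hsm.injective h0 s
  obtain ⟨q, hq⟩ := exists_nat_gt (1/δ)
  have hqδ : (1:ℝ)/(q+1) ≤ δ := by
    rw [div_le_iff₀ (by positivity)]
    have h1 : 1/δ < (q:ℝ) + 1 := by linarith [hq]
    rw [div_lt_iff₀ hδ] at h1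
    nlinarith
  have hspec := (SubNotI0.chain_spec r hmono hpos hsub (Nat.pair k q)).2.2
  simp only [Nat.unpair_pair] at hspec
  apply hspec
  refine ⟨α, ?_⟩
  intro i i' hne
  have e1 : (SubNotI0.chain r hmono hpos hsub (Nat.pair k q + 1)).2 i = s i :=
    (SubNotI0.slim_agree r hmono hpos hsub (Nat.pair k q + 1) i i.isLt).symm
  have e2 : (SubNotI0.chain r hmono hpos hsub (Nat.pair k q + 1)).2 i' = s i' :=
    (SubNotI0.slim_agree r hmono hpos hsub (Nat.pair k q + 1) i' i'.isLt).symm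
  simp only [e1, e2] at hne
  obtain ⟨j, hj⟩ := hsep i i' hne
  exact ⟨j, le_trans hqδ hj⟩
end
end

section
/- (Hartman–Ryll-Nardzewski criterion) A set E ⊆ ℕ is an I_0-set if and only if every two disjoint subsets A, B ⊆ E are separable by a Bohr rotation. -/
open Filter Topology

noncomputable section

/-- helper: the basic character -/
def tchar (a : ℝ) (n : ℕ) : ℂ := Complex.exp (2 * Real.pi * Complex.I * (n : ℂ) * (a : ℂ))

lemma isTrigPoly_of_finset {ι : Type*} (s : Finset ι) (c : ι → ℂ) (a : ι → ℝ) (ψ : ℕ → ℂ)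
    (h : ∀ n, ψ n = ∑ j ∈ s, c j * tchar (a j) n) : IsTrigPoly ψ := by
  refine ⟨s.card, fun i => c ((s.equivFin.symm i) : ι), fun i => a ((s.equivFin.symm i) : ι),
    fun n => ?_⟩
  rw [h n, ← Finset.sum_coe_sort s (fun j => c j * tchar (a j) n)]
  exact Fintype.sum_equiv s.equivFin _ _ (fun x => by simp [tchar])

lemma isTrigPoly_iff (ψ : ℕ → ℂ) : IsTrigPoly ψ ↔
    ∃ (k : ℕ) (c : Fin k → ℂ) (a : Fin k → ℝ), ∀ n, ψ n = ∑ j, c j * tchar (a j) n := Iff.rfl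

lemma IsTrigPoly.zero : IsTrigPoly (fun _ => (0:ℂ)) :=
  isTrigPoly_of_finset (∅ : Finset ℕ) 0 0 _ (by simp)

lemma IsTrigPoly.const (z : ℂ) : IsTrigPoly (fun _ => z) := by
  refine isTrigPoly_of_finset {0} (fun _ : ℕ => z) (fun _ => 0) _ (fun n => ?_)
  simp [tchar]

lemma tchar_mul (a b : ℝ) (n : ℕ) : tchar a n * tchar b n = tchar (a + b) n := by
  simp only [tchar, ← Complex.exp_add]
  congr 1
  push_cast
  ring

lemma IsTrigPoly.add {ψ φ : ℕ → ℂ} (hψ : IsTrigPoly ψ) (hφ : IsTrigPoly φ) :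
    IsTrigPoly (ψ + φ) := by
  obtain ⟨k, c, a, h⟩ := hψ
  obtain ⟨k', c', a', h'⟩ := hφ
  refine isTrigPoly_of_finset (Finset.univ : Finset (Fin k ⊕ Fin k'))
    (Sum.elim c c') (Sum.elim a a') _ (fun n => ?_)
  rw [Fintype.sum_sum_type]
  simp only [Pi.add_apply, h n, h' n, tchar, Sum.elim_inl, Sum.elim_inr]

lemma IsTrigPoly.mul {ψ φ : ℕ → ℂ} (hψ : IsTrigPoly ψ) (hφ : IsTrigPoly φ) :
    IsTrigPoly (ψ * φ) := by
  obtain ⟨k, c, a, h⟩ := hψ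
  obtain ⟨k', c', a', h'⟩ := hφ
  refine isTrigPoly_of_finset (Finset.univ : Finset (Fin k × Fin k'))
    (fun p => c p.1 * c' p.2) (fun p => a p.1 + a' p.2) _ (fun n => ?_)
  rw [Pi.mul_apply, h n, h' n, Finset.sum_mul_sum, Fintype.sum_prod_type]
  refine Finset.sum_congr rfl (fun i _ => Finset.sum_congr rfl (fun j _ => ?_))
  rw [← tchar_mul]
  show (c i * Complex.exp _) * (c' j * Complex.exp _) = _
  simp only [tchar]
  ring

lemma IsTrigPoly.star {ψ : ℕ → ℂ} (hψ : IsTrigPoly ψ) :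
    IsTrigPoly (fun n => (starRingEnd ℂ) (ψ n)) := by
  obtain ⟨k, c, a, h⟩ := hψ
  refine isTrigPoly_of_finset Finset.univ (fun j => (starRingEnd ℂ) (c j)) (fun j => -(a j)) _
    (fun n => ?_)
  rw [h n, map_sum]
  refine Finset.sum_congr rfl (fun j _ => ?_)
  rw [map_mul]
  congr 1
  show (starRingEnd ℂ) (tchar (a j) n) = _
  rw [tchar, tchar, ← Complex.exp_conj]
  congr 1
  simp only [map_mul, Complex.conj_I, map_ofNat, Complex.conj_ofReal,
    Complex.conj_natCast]
  push_cast
  ring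

lemma IsTrigPoly.smul (z : ℂ) {ψ : ℕ → ℂ} (hψ : IsTrigPoly ψ) :
    IsTrigPoly (fun n => z * ψ n) := by
  have := (IsTrigPoly.const z).mul hψ
  simpa [Pi.mul_def] using this

lemma IsTrigPoly.finsum {ι : Type*} [DecidableEq ι] (s : Finset ι) (f : ι → ℕ → ℂ)
    (h : ∀ i ∈ s, IsTrigPoly (f i)) : IsTrigPoly (fun n => ∑ i ∈ s, f i n) := by
  induction s using Finset.induction_on with
  | empty => simpa using IsTrigPoly.zero
  | @insert x s hx ih =>
    simp only [Finset.sum_insert hx]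
    exact (h x (Finset.mem_insert_self x s)).add
      (ih (fun i hi => h i (Finset.mem_insert_of_mem hi)))

section Bohr

open AddCircle

abbrev Td (d : ℕ) := Fin d → AddCircle (1 : ℝ)

lemma toCircle_coe_real (r : ℝ) (n : ℕ) :
    ((toCircle (n • ((r : ℝ) : AddCircle (1:ℝ)))) : ℂ) = tchar r n := by
  rw [← AddCircle.coe_nsmul, toCircle_apply_mk, Circle.coe_exp, tchar]
  rw [nsmul_eq_mul]
  push_cast
  ring_nf

/-- The `j`-th coordinate character on `𝕋^d`. -/
def charFn (d : ℕ) (j : Fin d) : C(Td d, ℂ) :=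
  ⟨fun x => (toCircle (x j) : ℂ),
    continuous_subtype_val.comp (continuous_toCircle.comp (continuous_apply j))⟩

/-- The star subalgebra generated by coordinate characters. -/
def charAlg (d : ℕ) : StarSubalgebra ℂ C(Td d, ℂ) :=
  StarAlgebra.adjoin ℂ (Set.range (charFn d))

lemma charAlg_separates (d : ℕ) : (charAlg d).SeparatesPoints := by
  intro x y hxy
  rw [Function.ne_iff] at hxy
  obtain ⟨j, hj⟩ := hxy
  refine ⟨charFn d j, ⟨charFn d j, StarAlgebra.subset_adjoin ℂ _ ⟨j, rfl⟩, rfl⟩, ?_⟩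
  simp only [charFn, ContinuousMap.coe_mk]
  intro h
  exact hj (injective_toCircle one_ne_zero (Subtype.coe_injective h))

lemma isTrigPoly_of_mem_charAlg {d : ℕ} (α : Td d) {F : C(Td d, ℂ)} (hF : F ∈ charAlg d) :
    IsTrigPoly (fun n => F (n • α)) := by
  induction hF using StarAlgebra.adjoin_induction with
  | mem F hFmem =>
    obtain ⟨j, rfl⟩ := hFmem
    obtain ⟨r, hr⟩ : ∃ r : ℝ, ((r : ℝ) : AddCircle (1:ℝ)) = α j := Quotient.exists_rep (α j)
    refine isTrigPoly_of_finset {(0:ℕ)} (fun _ => 1) (fun _ => r) _ (fun n => ?_)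
    simp only [Finset.sum_singleton, one_mul, charFn, ContinuousMap.coe_mk]
    rw [← toCircle_coe_real r n, hr]
    rfl
  | algebraMap c => exact IsTrigPoly.const c
  | add F G _ _ hF hG =>
    have := hF.add hG
    simpa [Pi.add_def] using this
  | mul F G _ _ hF hG =>
    have := hF.mul hG
    simpa [Pi.mul_def] using this
  | star F _ hF =>
    have := hF.star
    simpa using this

end Bohr

section Indicator

lemma exists_trig_near_indicator {A B : Set ℕ} (h : SeparableByBohr A B) {ε : ℝ} (hε : 0 < ε) :
    ∃ φ : ℕ → ℂ, IsTrigPoly φ ∧ (∀ n, ‖φ n‖ ≤ 1 + ε) ∧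
      (∀ n ∈ A, ‖φ n - 1‖ < ε) ∧ (∀ n ∈ B, ‖φ n‖ < ε) := by
  obtain ⟨d, α, hdisj⟩ := h
  set ι := fun n : ℕ => n • α with hι
  obtain ⟨u, hu0, hu1, hu01⟩ :=
    exists_continuous_zero_one_of_isClosed (X := Td d) isClosed_closure isClosed_closure
      (Set.disjoint_iff_inter_eq_empty.mpr hdisj).symm
  let G : C(Td d, ℂ) := ⟨fun x => (u x : ℂ), Complex.continuous_ofReal.comp u.continuous⟩
  have htop := ContinuousMap.starSubalgebra_topologicalClosure_eq_top_of_separatesPoints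
    (charAlg d) (charAlg_separates d)
  have hGmem : G ∈ closure ((charAlg d : Set C(Td d, ℂ))) := by
    have : G ∈ (charAlg d).topologicalClosure := by rw [htop]; trivial
    exact this
  obtain ⟨F, hFmem, hFd⟩ := Metric.mem_closure_iff.mp hGmem ε hε
  have hpt : ∀ x, ‖G x - F x‖ < ε := fun x => by
    rw [← Complex.dist_eq]
    exact lt_of_le_of_lt (ContinuousMap.dist_apply_le_dist x) hFd
  refine ⟨fun n => F (ι n), isTrigPoly_of_mem_charAlg α hFmem, fun n => ?_, fun n hn => ?_,
    fun n hn => ?_⟩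
  · have h1 : ‖G (ι n)‖ ≤ 1 := by
      simp only [G, ContinuousMap.coe_mk, Complex.norm_real, Real.norm_eq_abs]
      exact abs_le.mpr ⟨by linarith [(hu01 (ι n)).1], (hu01 (ι n)).2⟩
    have h2 := hpt (ι n)
    have key : ‖F (ι n)‖ ≤ ‖G (ι n)‖ + ‖G (ι n) - F (ι n)‖ := by
      have hh := norm_add_le (G (ι n)) (F (ι n) - G (ι n))
      simp only [add_sub_cancel] at hh
      calc ‖F (ι n)‖ ≤ ‖G (ι n)‖ + ‖F (ι n) - G (ι n)‖ := hh
        _ = ‖G (ι n)‖ + ‖G (ι n) - F (ι n)‖ := by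
            rw [norm_sub_rev]
    exact key.trans (add_le_add h1 h2.le)
  · have hmem : ι n ∈ closure (ι '' A) := subset_closure (Set.mem_image_of_mem ι hn)
    have : G (ι n) = 1 := by
      simp only [G, ContinuousMap.coe_mk]
      rw [hu1 hmem]
      simp
    have h2 := hpt (ι n)
    rw [this] at h2
    calc ‖F (ι n) - 1‖ = ‖1 - F (ι n)‖ := by rw [← norm_neg]; ring_nf
      _ < ε := h2
  · have hmem : ι n ∈ closure (ι '' B) := subset_closure (Set.mem_image_of_mem ι hn)
    have : G (ι n) = 0 := by
      simp only [G, ContinuousMap.coe_mk]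
      rw [hu0 hmem]
      simp
    have h2 := hpt (ι n)
    rw [this] at h2
    calc ‖F (ι n)‖ = ‖0 - F (ι n)‖ := by rw [← norm_neg]; ring_nf
      _ < ε := h2

end Indicator

section Forward

lemma forward_dir {E : Set ℕ} (hE : IsI0Set E) {A B : Set ℕ} (hA : A ⊆ E) (hB : B ⊆ E)
    (hAB : Disjoint A B) : SeparableByBohr A B := by
  classical
  set f : ℕ → ℂ := A.indicator (fun _ => 1) with hf
  obtain ⟨ψ, hψAP, hψE⟩ := hE f ⟨1, fun n _ => by
    by_cases hn : n ∈ A <;> simp [hf, Set.indicator_apply, hn]⟩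
  obtain ⟨φ, hφtrig, hφψ⟩ := hψAP (1/4) (by norm_num)
  obtain ⟨k, c, a, hrep⟩ := hφtrig
  set ᾱ : Fin k → AddCircle (1:ℝ) := fun j => ((a j : ℝ) : AddCircle (1:ℝ)) with hᾱ
  set F : Td k → ℂ := fun x => ∑ j, c j * (AddCircle.toCircle (x j) : ℂ) with hF
  have hFcont : Continuous F := continuous_finset_sum _ (fun j _ =>
    continuous_const.mul (continuous_subtype_val.comp
      (AddCircle.continuous_toCircle.comp (continuous_apply j))))
  have hFι : ∀ n : ℕ, F (n • ᾱ) = φ n := by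
    intro n
    rw [hrep n, hF]
    refine Finset.sum_congr rfl (fun j _ => ?_)
    congr 1
    rw [Pi.smul_apply, hᾱ]
    exact toCircle_coe_real (a j) n
  refine ⟨k, ᾱ, ?_⟩
  have hφA : ∀ n ∈ A, ‖φ n - 1‖ < 1/4 := by
    intro n hn
    have h1 : ψ n = 1 := by rw [hψE n (hA hn)]; simp [hf, Set.indicator_of_mem hn]
    have := hφψ n
    rw [h1] at this
    calc ‖φ n - 1‖ = ‖1 - φ n‖ := by
          rw [← norm_neg]; ring_nf
      _ < 1/4 := this
  have hφB : ∀ n ∈ B, ‖φ n‖ < 1/4 := by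
    intro n hn
    have h0 : ψ n = 0 := by
      rw [hψE n (hB hn)]
      have : n ∉ A := fun hmem => (hAB.ne_of_mem hmem hn) rfl
      simp [hf, Set.indicator_of_notMem this]
    have := hφψ n
    rw [h0] at this
    calc ‖φ n‖ = ‖0 - φ n‖ := by
          rw [← norm_neg]; ring_nf
      _ < 1/4 := this
  set SA : Set (Td k) := F ⁻¹' (Metric.closedBall (1:ℂ) (1/4)) with hSA
  set SB : Set (Td k) := F ⁻¹' (Metric.closedBall (0:ℂ) (1/4)) with hSB
  have hclA : closure ((fun n : ℕ => n • ᾱ) '' A) ⊆ SA := by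
    refine closure_minimal ?_ (Metric.isClosed_closedBall.preimage hFcont)
    rintro x ⟨n, hn, rfl⟩
    simp only [hSA, Set.mem_preimage, Metric.mem_closedBall, Complex.dist_eq]
    rw [hFι n]
    exact (hφA n hn).le
  have hclB : closure ((fun n : ℕ => n • ᾱ) '' B) ⊆ SB := by
    refine closure_minimal ?_ (Metric.isClosed_closedBall.preimage hFcont)
    rintro x ⟨n, hn, rfl⟩
    simp only [hSB, Set.mem_preimage, Metric.mem_closedBall, Complex.dist_eq]
    rw [hFι n]
    simpa using (hφB n hn).le
  rw [Set.eq_empty_iff_forall_notMem]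
  rintro x ⟨hxA, hxB⟩
  have h1 : dist (F x) (1:ℂ) ≤ 1/4 := hclA hxA
  have h2 : dist (F x) (0:ℂ) ≤ 1/4 := hclB hxB
  have := dist_triangle (1:ℂ) (F x) 0
  rw [dist_comm (1:ℂ) (F x)] at this
  have h3 : dist (1:ℂ) (0:ℂ) = 1 := by simp
  linarith [h3 ▸ this]

end Forward

section Step

lemma exists_cover : ∃ t : Finset ℂ,
    Metric.closedBall (0:ℂ) 1 ⊆ ⋃ z ∈ t, Metric.ball z (1/8) := by
  obtain ⟨t, ht⟩ := (isCompact_closedBall (0:ℂ) 1).elim_finite_subcover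
    (fun z : ℂ => Metric.ball z (1/8)) (fun _ => Metric.isOpen_ball)
    (fun x hx => Set.mem_iUnion.mpr ⟨x, Metric.mem_ball_self (by norm_num)⟩)
  exact ⟨t, ht⟩

lemma step_approx (E : Set ℕ)
    (hsep : ∀ A B : Set ℕ, A ⊆ E → B ⊆ E → Disjoint A B → SeparableByBohr A B) :
    ∃ K : ℝ, 1 ≤ K ∧ ∀ (f : ℕ → ℂ) (C : ℝ), 0 < C → (∀ n ∈ E, ‖f n‖ ≤ C) →
      ∃ φ : ℕ → ℂ, IsTrigPoly φ ∧ (∀ n ∈ E, ‖f n - φ n‖ ≤ C/2) ∧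
        ∀ n, ‖φ n‖ ≤ K * C := by
  classical
  obtain ⟨t, ht⟩ := exists_cover
  set S : ℝ := ∑ z ∈ t, ‖z‖ with hS
  have hS0 : 0 ≤ S := Finset.sum_nonneg (fun z _ => (norm_nonneg z))
  set δ : ℝ := 1 / (8 * (S + 1)) with hδ
  have hδpos : 0 < δ := by positivity
  have hδ1 : δ ≤ 1 := by
    rw [hδ]
    rw [div_le_one (by positivity)]
    linarith
  refine ⟨2 * (S + 1), by linarith, fun f C hC hfC => ?_⟩
  set pick : ℂ → ℂ := fun x =>
    if h : ∃ z ∈ t, x ∈ Metric.ball z (1/8) then h.choose else 0 with hpickdef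
  have hpick : ∀ x ∈ Metric.closedBall (0:ℂ) 1, pick x ∈ t ∧ dist x (pick x) < 1/8 := by
    intro x hx
    have hex : ∃ z ∈ t, x ∈ Metric.ball z (1/8) := by
      have := ht hx
      rw [Set.mem_iUnion₂] at this
      obtain ⟨z, hz, hmem⟩ := this
      exact ⟨z, hz, hmem⟩
    have hpx : pick x = hex.choose := dif_pos hex
    rw [hpx]
    exact ⟨hex.choose_spec.1, Metric.mem_ball.mp hex.choose_spec.2⟩
  -- the pieces
  set Epart : ℂ → Set ℕ := fun z => {n | n ∈ E ∧ pick (f n / (C:ℂ)) = z} with hEpart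
  have hsub : ∀ z, Epart z ⊆ E := fun z n hn => hn.1
  have hchoice : ∀ z ∈ t, ∃ φz : ℕ → ℂ, IsTrigPoly φz ∧
      (∀ n, ‖φz n‖ ≤ 1 + δ) ∧
      (∀ n ∈ Epart z, ‖φz n - 1‖ < δ) ∧
      (∀ n ∈ E \ Epart z, ‖φz n‖ < δ) := by
    intro z _
    exact exists_trig_near_indicator
      (hsep (Epart z) (E \ Epart z) (hsub z) Set.diff_subset
        (Set.disjoint_left.mpr (fun n hn hmem => hmem.2 hn))) hδpos
  choose Φ hΦtrig hΦbd hΦ1 hΦ0 using hchoice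
  set φ : ℕ → ℂ := fun n => ∑ z ∈ t.attach, ((C:ℂ) * z) * Φ z z.2 n with hφ
  have hφtrig : IsTrigPoly φ := by
    refine IsTrigPoly.finsum t.attach _ (fun z _ => ?_)
    exact (hΦtrig z z.2).smul ((C:ℂ) * z)
  refine ⟨φ, hφtrig, ?_, ?_⟩
  · intro n hn
    have hxball : f n / (C:ℂ) ∈ Metric.closedBall (0:ℂ) 1 := by
      rw [Metric.mem_closedBall, Complex.dist_eq, sub_zero, norm_div, Complex.norm_of_nonneg hC.le, div_le_one hC]
      exact hfC n hn
    obtain ⟨hz0t, hz0d⟩ := hpick _ hxball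
    set z₀ : ℂ := pick (f n / (C:ℂ)) with hz₀
    have hz₀att : (⟨z₀, hz0t⟩ : {x // x ∈ t}) ∈ t.attach := Finset.mem_attach _ _
    have hnE : n ∈ Epart z₀ := ⟨hn, rfl⟩
    -- split the sum
    have hsplit : φ n = ((C:ℂ) * z₀) * Φ z₀ hz0t n +
        ∑ z ∈ t.attach.erase ⟨z₀, hz0t⟩, ((C:ℂ) * z) * Φ z z.2 n := by
      rw [hφ]
      exact (Finset.add_sum_erase _ _ hz₀att).symm
    have key : f n - φ n = (f n - (C:ℂ) * z₀) + ((C:ℂ) * z₀) * (1 - Φ z₀ hz0t n)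
        - ∑ z ∈ t.attach.erase ⟨z₀, hz0t⟩, ((C:ℂ) * z) * Φ z z.2 n := by
      rw [hsplit]; ring
    rw [key]
    have e1 : ‖f n - (C:ℂ) * z₀‖ ≤ C/8 := by
      have : ‖f n / (C:ℂ) - z₀‖ < 1/8 := by
        rw [← Complex.dist_eq]; exact hz0d
      have h2 : ‖(C:ℂ) * (f n / (C:ℂ) - z₀)‖ ≤ C * (1/8) := by
        rw [norm_mul, Complex.norm_of_nonneg hC.le]
        exact mul_le_mul_of_nonneg_left this.le hC.le
      have hCne : (C:ℂ) ≠ 0 := Complex.ofReal_ne_zero.mpr hC.ne'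
      have h3 : (C:ℂ) * (f n / (C:ℂ) - z₀) = f n - (C:ℂ) * z₀ := by
        rw [mul_sub, mul_div_cancel₀ _ hCne]
      rw [h3] at h2
      linarith
    have e2 : ‖((C:ℂ) * z₀) * (1 - Φ z₀ hz0t n)‖ ≤ C * ‖z₀‖ * δ := by
      rw [norm_mul, norm_mul, Complex.norm_of_nonneg hC.le]
      have h1 : ‖1 - Φ z₀ hz0t n‖ ≤ δ := by
        have := hΦ1 z₀ hz0t n hnE
        calc ‖1 - Φ z₀ hz0t n‖ = ‖Φ z₀ hz0t n - 1‖ := by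
              rw [← norm_neg]; ring_nf
          _ ≤ δ := this.le
      exact mul_le_mul_of_nonneg_left h1 (by positivity)
    have e3 : ‖∑ z ∈ t.attach.erase ⟨z₀, hz0t⟩, ((C:ℂ) * z) * Φ z z.2 n‖
        ≤ ∑ z ∈ t.attach.erase ⟨z₀, hz0t⟩, C * ‖(z : ℂ)‖ * δ := by
      refine (norm_sum_le _ _).trans (Finset.sum_le_sum (fun z hz => ?_))
      rw [norm_mul, norm_mul, Complex.norm_of_nonneg hC.le]
      have hzne : (z : ℂ) ≠ z₀ ∨ True := Or.inr trivial
      have hnmem : n ∈ E \ Epart (z : ℂ) := by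
        refine ⟨hn, fun hmem => ?_⟩
        have : (z : {x // x ∈ t}) ≠ ⟨z₀, hz0t⟩ := (Finset.mem_erase.mp hz).1
        apply this
        ext
        rw [← hmem.2]
      exact mul_le_mul_of_nonneg_left (hΦ0 z z.2 n hnmem).le (by positivity)
    have e4 : ∑ z ∈ t.attach.erase ⟨z₀, hz0t⟩, C * ‖(z : ℂ)‖ * δ
        ≤ C * S * δ := by
      have h1 : ∑ z ∈ t.attach.erase ⟨z₀, hz0t⟩, C * ‖(z : ℂ)‖ * δ
          ≤ ∑ z ∈ t.attach, C * ‖(z : ℂ)‖ * δ :=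
        Finset.sum_le_sum_of_subset_of_nonneg (Finset.erase_subset _ _)
          (fun z _ _ => by positivity)
      have h2 : ∑ z ∈ t.attach, C * ‖(z : ℂ)‖ * δ = C * S * δ := by
        rw [hS, Finset.mul_sum, Finset.sum_mul, ← Finset.sum_attach t (fun z => C * ‖z‖ * δ)]
      linarith
    have habs : ‖(f n - (C:ℂ) * z₀) + ((C:ℂ) * z₀) * (1 - Φ z₀ hz0t n)
        - ∑ z ∈ t.attach.erase ⟨z₀, hz0t⟩, ((C:ℂ) * z) * Φ z z.2 n‖
        ≤ C/8 + C * ‖z₀‖ * δ + C * S * δ := by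
      have step1 := (norm_sub_le ((f n - (C:ℂ) * z₀) + ((C:ℂ) * z₀) * (1 - Φ z₀ hz0t n))
        (∑ z ∈ t.attach.erase ⟨z₀, hz0t⟩, ((C:ℂ) * z) * Φ z z.2 n))
      have step2 := (norm_add_le (f n - (C:ℂ) * z₀) (((C:ℂ) * z₀) * (1 - Φ z₀ hz0t n)))
      have step3 := e3.trans e4
      linarith
    refine habs.trans ?_
    -- z₀ ∈ t so |z₀| ≤ S
    have hz₀S : ‖z₀‖ ≤ S := Finset.single_le_sum (fun z _ => norm_nonneg z) hz0t
    have hSδ : S * δ ≤ 1/8 := by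
      rw [hδ, mul_one_div, div_le_div_iff₀ (by positivity) (by norm_num)]
      linarith
    have hA : C * ‖z₀‖ * δ ≤ C * S * δ :=
      mul_le_mul_of_nonneg_right (mul_le_mul_of_nonneg_left hz₀S hC.le) hδpos.le
    have hB : C * S * δ ≤ C * (1/8) := by
      rw [mul_assoc]
      exact mul_le_mul_of_nonneg_left hSδ hC.le
    linarith
  · intro n
    have : ‖φ n‖ ≤ ∑ z ∈ t.attach, C * ‖(z : ℂ)‖ * (1 + δ) := by
      refine (norm_sum_le _ _).trans (Finset.sum_le_sum (fun z _ => ?_))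
      rw [norm_mul, norm_mul, Complex.norm_of_nonneg hC.le]
      exact mul_le_mul_of_nonneg_left (hΦbd z z.2 n) (by positivity)
    have h2 : ∑ z ∈ t.attach, C * ‖(z : ℂ)‖ * (1 + δ) = C * S * (1 + δ) := by
      rw [hS, Finset.mul_sum, Finset.sum_mul, ← Finset.sum_attach t (fun z => C * ‖z‖ * (1 + δ))]
    rw [h2] at this
    refine this.trans ?_
    have hq : S * (1 + δ) ≤ 2 * (S + 1) := by nlinarith [mul_le_mul_of_nonneg_left hδ1 hS0]
    calc C * S * (1 + δ) = C * (S * (1 + δ)) := by ring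
      _ ≤ C * (2 * (S + 1)) := mul_le_mul_of_nonneg_left hq hC.le
      _ = 2 * (S + 1) * C := by ring

end Step

section Reverse

lemma reverse_dir (E : Set ℕ)
    (hsep : ∀ A B : Set ℕ, A ⊆ E → B ⊆ E → Disjoint A B → SeparableByBohr A B) :
    IsI0Set E := by
  classical
  rintro f ⟨C₀, hC₀⟩
  obtain ⟨K, hK1, hstep⟩ := step_approx E hsep
  set C := max C₀ 1 with hCdef
  have hCpos : (0:ℝ) < C := lt_of_lt_of_le one_pos (le_max_right _ _)
  have hfC : ∀ n ∈ E, ‖f n‖ ≤ C := fun n hn => (hC₀ n hn).trans (le_max_left _ _)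
  set next : (ℕ → ℂ) → ℝ → (ℕ → ℂ) := fun h D =>
    if hd : 0 < D ∧ ∀ n ∈ E, ‖h n‖ ≤ D then (hstep h D hd.1 hd.2).choose else 0
    with hnext
  set g : ℕ → (ℕ → ℂ) := fun m => Nat.rec f (fun m hm => hm - next hm (C / 2 ^ m)) m with hg
  set φ : ℕ → (ℕ → ℂ) := fun m => next (g m) (C / 2 ^ m) with hφdef
  have hgsucc : ∀ m, g (m + 1) = g m - φ m := fun m => rfl
  have hDpos : ∀ m : ℕ, (0:ℝ) < C / 2 ^ m := fun m => by positivity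
  have hinv : ∀ m, ∀ n ∈ E, ‖g m n‖ ≤ C / 2 ^ m := by
    intro m
    induction m with
    | zero => intro n hn; rw [pow_zero, div_one]; exact hfC n hn
    | succ m ih =>
      have hd : 0 < C / 2 ^ m ∧ ∀ n ∈ E, ‖g m n‖ ≤ C / 2 ^ m := ⟨hDpos m, ih⟩
      have hφeq : φ m = (hstep (g m) (C / 2 ^ m) hd.1 hd.2).choose := dif_pos hd
      have hspec := (hstep (g m) (C / 2 ^ m) hd.1 hd.2).choose_spec
      intro n hn
      rw [hgsucc m]
      have h1 := hspec.2.1 n hn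
      rw [← hφeq] at h1
      have heq : C / 2 ^ m / 2 = C / 2 ^ (m + 1) := by rw [pow_succ]; ring
      calc ‖(g m - φ m) n‖ = ‖g m n - φ m n‖ := rfl
        _ ≤ C / 2 ^ m / 2 := h1
        _ = C / 2 ^ (m+1) := heq
  have hφspec : ∀ m, IsTrigPoly (φ m) ∧ ∀ n, ‖φ m n‖ ≤ K * (C / 2 ^ m) := by
    intro m
    have hd : 0 < C / 2 ^ m ∧ ∀ n ∈ E, ‖g m n‖ ≤ C / 2 ^ m := ⟨hDpos m, hinv m⟩
    have hφeq : φ m = (hstep (g m) (C / 2 ^ m) hd.1 hd.2).choose := dif_pos hd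
    have hspec := (hstep (g m) (C / 2 ^ m) hd.1 hd.2).choose_spec
    rw [hφeq]
    exact ⟨hspec.1, hspec.2.2⟩
  have hbd : ∀ m n, ‖φ m n‖ ≤ K * C * (1/2) ^ m := by
    intro m n
    have := (hφspec m).2 n
    refine this.trans (le_of_eq ?_)
    rw [one_div, inv_pow, ← div_eq_mul_inv]
    ring
  have hsum : ∀ n, Summable (fun m => φ m n) := fun n =>
    Summable.of_norm_bounded
      (summable_geometric_two.mul_left (K * C)) (hbd · n)
  set ψ : ℕ → ℂ := fun n => ∑' m, φ m n with hψ
  have hKC0 : (0:ℝ) < K * C := by positivity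
  refine ⟨ψ, ?_, ?_⟩
  · intro ε hε
    have h2 : Tendsto (fun m : ℕ => 2 * (K * C) * (1/2:ℝ) ^ m) atTop (𝓝 0) := by
      have := (tendsto_pow_atTop_nhds_zero_of_lt_one
        (by norm_num : (0:ℝ) ≤ 1/2) (by norm_num : (1/2:ℝ) < 1)).const_mul (2 * (K * C))
      simpa using this
    obtain ⟨m, hm⟩ := (h2.eventually (gt_mem_nhds hε)).exists
    refine ⟨fun n => ∑ i ∈ Finset.range m, φ i n,
      IsTrigPoly.finsum _ _ (fun i _ => (hφspec i).1), fun n => ?_⟩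
    have hs := hsum n
    have htail : ψ n - ∑ i ∈ Finset.range m, φ i n = ∑' i, φ (i + m) n := by
      have h3 := Summable.sum_add_tsum_nat_add m hs
      have h4 : ψ n = ∑' i, φ i n := rfl
      rw [h4, ← h3]
      ring
    rw [htail]
    have hsumshift : Summable (fun i => K * C * (1/2:ℝ) ^ (i + m)) := by
      have : (fun i : ℕ => K * C * (1/2:ℝ) ^ (i + m))
          = fun i : ℕ => (K * C * (1/2:ℝ) ^ m) * (1/2:ℝ) ^ i := by
        funext i; rw [pow_add]; ring
      rw [this]
      exact summable_geometric_two.mul_left _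
    have hb1 : ‖∑' i, φ (i + m) n‖ ≤ ∑' i, ‖φ (i + m) n‖ :=
      norm_tsum_le_tsum_norm (hs.comp_injective (add_left_injective m) |>.norm)
    have hb2 : ∑' i, ‖φ (i + m) n‖ ≤ ∑' i, K * C * (1/2:ℝ) ^ (i + m) :=
      Summable.tsum_le_tsum (fun i => hbd (i + m) n)
        (hs.comp_injective (add_left_injective m) |>.norm) hsumshift
    have hb3 : ∑' i, K * C * (1/2:ℝ) ^ (i + m) = 2 * (K * C) * (1/2:ℝ) ^ m := by
      have heq : (fun i : ℕ => K * C * (1/2:ℝ) ^ (i + m))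
          = fun i : ℕ => (K * C * (1/2:ℝ) ^ m) * (1/2:ℝ) ^ i := by
        funext i; rw [pow_add]; ring
      rw [heq, tsum_mul_left, tsum_geometric_two]
      ring
    calc ‖∑' i, φ (i + m) n‖ = ‖∑' i, φ (i + m) n‖ := rfl
      _ ≤ ∑' i, K * C * (1/2:ℝ) ^ (i + m) := hb1.trans hb2
      _ = 2 * (K * C) * (1/2:ℝ) ^ m := hb3
      _ < ε := hm
  · intro n hn
    have h1 : Tendsto (fun m => ∑ i ∈ Finset.range m, φ i n) atTop (𝓝 (ψ n)) :=
      (hsum n).hasSum.tendsto_sum_nat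
    have h2 : ∀ m, ∑ i ∈ Finset.range m, φ i n = f n - g m n := by
      intro m
      induction m with
      | zero => simp [hg]
      | succ m ih =>
        rw [Finset.sum_range_succ, ih, hgsucc m]
        show _ = f n - (g m n - φ m n)
        ring
    have hb : Tendsto (fun m : ℕ => C * (1/2:ℝ) ^ m) atTop (𝓝 0) := by
      have := (tendsto_pow_atTop_nhds_zero_of_lt_one
        (by norm_num : (0:ℝ) ≤ 1/2) (by norm_num : (1/2:ℝ) < 1)).const_mul C
      simpa using this
    have h3 : Tendsto (fun m => g m n) atTop (𝓝 0) := by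
      refine squeeze_zero_norm (fun m => ?_) hb
      refine (hinv m n hn).trans (le_of_eq ?_)
      rw [one_div, inv_pow, ← div_eq_mul_inv]
    have h4 : Tendsto (fun m => f n - g m n) atTop (𝓝 (f n)) := by
      have := (tendsto_const_nhds : Tendsto (fun _ : ℕ => f n) atTop (𝓝 (f n))).sub h3
      simpa using this
    have h5 : Tendsto (fun m => ∑ i ∈ Finset.range m, φ i n) atTop (𝓝 (f n)) := by
      simpa only [h2] using h4
    exact tendsto_nhds_unique h1 h5

end Reverse

/-- Hartman–Ryll-Nardzewski criterion: `E` is an `I₀`-set iff every two disjoint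
subsets of `E` are separable by a Bohr rotation. -/
theorem I0_iff_separable (E : Set ℕ) :
    IsI0Set E ↔
      ∀ A B : Set ℕ, A ⊆ E → B ⊆ E → Disjoint A B → SeparableByBohr A B :=
  ⟨fun h _ _ hA hB hAB => forward_dir h hA hB hAB, reverse_dir E⟩
end
end

section
/- Let R ⊆ ℕ be a set of Bohr recurrence. Then for every d ∈ ℕ and every ε > 0 there exists a finite subset R_ε ⊆ R such that for every α ∈ 𝕋^d = (ℝ/ℤ)^d there exists r ∈ R_ε with ‖rα‖_{𝕋^d} < ε, where ‖β‖_{𝕋^d} denotes the maximum over the d coordinates of the distance from that coordinate of β to 0 in ℝ/ℤ. (This is the 1-step, torus, case of the paper's compactness lemma for sets of pointwise nilrecurrence.) -/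
open Filter Topology

noncomputable section

/-- Compactness lemma: for a set of Bohr recurrence `R`, every `d` and `ε > 0`, there
is a finite subset `Rε ⊆ R` such that every `α ∈ 𝕋^d` comes `ε`-close to `0` along
some `r ∈ Rε`. -/
theorem bohrRecurrence_finite_subset (R : Set ℕ) (hR : IsBohrRecurrence R)
    (d : ℕ) (ε : ℝ) (hε : 0 < ε) :
    ∃ Rε : Finset ℕ, ↑Rε ⊆ R ∧
      ∀ α : Fin d → AddCircle (1 : ℝ), ∃ r ∈ Rε, dist (r • α) (0 : Fin d → AddCircle (1 : ℝ)) < ε := by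
  set U : R → Set (Fin d → AddCircle (1 : ℝ)) :=
    fun r => (fun α => (r : ℕ) • α) ⁻¹' Metric.ball 0 ε with hU
  have hopen : ∀ r : R, IsOpen (U r) := fun r =>
    Metric.isOpen_ball.preimage (by fun_prop)
  have hcov : (Set.univ : Set (Fin d → AddCircle (1 : ℝ))) ⊆ ⋃ r : R, U r := by
    intro α _
    have h0 := hR d α
    rw [mem_closure_iff] at h0
    obtain ⟨y, hy, ⟨n, hn, rfl⟩⟩ :=
      h0 (Metric.ball 0 ε) Metric.isOpen_ball (Metric.mem_ball_self hε)
    exact Set.mem_iUnion.2 ⟨⟨n, hn⟩, hy⟩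
  obtain ⟨t, ht⟩ := isCompact_univ.elim_finite_subcover U hopen hcov
  refine ⟨t.image (fun r : R => (r : ℕ)), ?_, ?_⟩
  · intro r hr
    simp only [Finset.coe_image, Set.mem_image] at hr
    obtain ⟨s, _, rfl⟩ := hr
    exact s.2
  · intro α
    obtain ⟨r, hrt, hrα⟩ := Set.mem_iUnion₂.1 (ht (Set.mem_univ α))
    exact ⟨(r : ℕ), Finset.mem_image_of_mem _ hrt, by simpa [hU, Metric.mem_ball] using hrα⟩
end
end

section
/- Let A, B, C ⊆ ℕ. Suppose that A and B are separable by a Bohr rotation and A and C are separable by a Bohr rotation. Then A and B ∪ C are separable by a Bohr rotation. (This is the 1-step, Bohr, case of the paper's lemma on separating a set from a union.) -/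
open Filter Topology

noncomputable section

lemma proj_closure_mem {d d' : ℕ} (ι : Fin d' → Fin d) (γ : Fin d → AddCircle (1 : ℝ))
    (D : Set ℕ) (x : Fin d → AddCircle (1 : ℝ))
    (hx : x ∈ closure ((fun n : ℕ => n • γ) '' D)) :
    (fun j => x (ι j)) ∈ closure ((fun n : ℕ => n • (γ ∘ ι)) '' D) := by
  set π : (Fin d → AddCircle (1 : ℝ)) → (Fin d' → AddCircle (1 : ℝ)) :=
    fun f j => f (ι j) with hπ
  have hcont : Continuous π := continuous_pi fun j => continuous_apply (ι j)
  have : π x ∈ closure (π '' ((fun n : ℕ => n • γ) '' D)) :=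
    (image_closure_subset_closure_image hcont) ⟨x, hx, rfl⟩
  have himg : π '' ((fun n : ℕ => n • γ) '' D) = (fun n : ℕ => n • (γ ∘ ι)) '' D := by
    rw [Set.image_image]
    rfl
  rw [himg] at this
  exact this

/-- If `A` is separable by Bohr rotations from `B` and from `C`, then `A` is separable
by a Bohr rotation from `B ∪ C`. -/
theorem separable_union (A B C : Set ℕ) (hAB : SeparableByBohr A B)
    (hAC : SeparableByBohr A C) : SeparableByBohr A (B ∪ C) := by
  obtain ⟨d₁, α, hα⟩ := hAB
  obtain ⟨d₂, β, hβ⟩ := hAC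
  refine ⟨d₁ + d₂, Fin.append α β, ?_⟩
  rw [Set.eq_empty_iff_forall_notMem]
  rintro x ⟨hxA, hxBC⟩
  rw [Set.image_union, closure_union] at hxBC
  have hl : Fin.append α β ∘ Fin.castAdd d₂ = α := by
    funext i; exact Fin.append_left α β i
  have hr : Fin.append α β ∘ Fin.natAdd d₁ = β := by
    funext i; exact Fin.append_right α β i
  rcases hxBC with hxB | hxC
  · have h1 := proj_closure_mem (Fin.castAdd d₂) (Fin.append α β) A x hxA
    have h2 := proj_closure_mem (Fin.castAdd d₂) (Fin.append α β) B x hxB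
    rw [hl] at h1 h2
    exact Set.eq_empty_iff_forall_notMem.1 hα _ ⟨h1, h2⟩
  · have h1 := proj_closure_mem (Fin.natAdd d₁) (Fin.append α β) A x hxA
    have h2 := proj_closure_mem (Fin.natAdd d₁) (Fin.append α β) C x hxC
    rw [hr] at h1 h2
    exact Set.eq_empty_iff_forall_notMem.1 hβ _ ⟨h1, h2⟩
end
end

section
/- Fix integers k ≥ 2 and m ≥ 1 and polynomials P_1, …, P_{m−1}, where P_i ∈ ℚ[s_1,…,s_i,t_1,…,t_i] has total degree at most k−1. Define the operation * on ℝ^m and the powers x^{*n} as in the context. Then there exist a polynomial R ∈ ℝ[x] with all coefficients nonnegative and, for every n ∈ ℕ and 1 ≤ i ≤ m, polynomials Q_{i,n} ∈ ℚ[x_1,…,x_m] such that: (a) for every x ∈ ℝ^m, x^{*n} = (Q_{1,n}(x), …, Q_{m,n}(x)); (b) each Q_{i,n} has total degree less than k^m; (c) for each i and n, the sum of the absolute values of the coefficients of Q_{i,n} is at most R(n). -/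
open MvPolynomial

namespace MalcevAux

variable {σ τ : Type*}

/-- Sum of absolute values of coefficients. -/
noncomputable def l1 (p : MvPolynomial σ ℚ) : ℚ := ∑ c ∈ p.support, |p.coeff c|

lemma l1_nonneg (p : MvPolynomial σ ℚ) : 0 ≤ l1 p :=
  Finset.sum_nonneg fun _ _ => abs_nonneg _

lemma l1_eq_sum_of_subset {p : MvPolynomial σ ℚ} {t : Finset (σ →₀ ℕ)}
    (h : p.support ⊆ t) : l1 p = ∑ c ∈ t, |p.coeff c| := by
  refine Finset.sum_subset h fun c _ hc => ?_
  rw [MvPolynomial.notMem_support_iff.mp hc, abs_zero]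

lemma l1_add_le (p q : MvPolynomial σ ℚ) : l1 (p + q) ≤ l1 p + l1 q := by
  classical
  have h1 : (p + q).support ⊆ p.support ∪ q.support := MvPolynomial.support_add
  rw [l1_eq_sum_of_subset h1,
    l1_eq_sum_of_subset (Finset.subset_union_left (s₂ := q.support)),
    l1_eq_sum_of_subset (Finset.subset_union_right (s₁ := p.support)),
    ← Finset.sum_add_distrib]
  refine Finset.sum_le_sum fun c _ => ?_
  rw [MvPolynomial.coeff_add]
  exact abs_add_le _ _

lemma l1_zero : l1 (0 : MvPolynomial σ ℚ) = 0 := by simp [l1]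

lemma l1_sum_le {ι : Type*} (s : Finset ι) (f : ι → MvPolynomial σ ℚ) :
    l1 (∑ i ∈ s, f i) ≤ ∑ i ∈ s, l1 (f i) := by
  classical
  induction s using Finset.induction with
  | empty => simp [l1_zero]
  | insert _ _ hx ih =>
    rw [Finset.sum_insert hx, Finset.sum_insert hx]
    exact (l1_add_le _ _).trans (by linarith)

lemma l1_monomial_le (c : σ →₀ ℕ) (a : ℚ) : l1 (monomial c a) ≤ |a| := by
  classical
  by_cases ha : a = 0
  · simp [ha, l1_zero]
  · rw [l1, MvPolynomial.support_monomial, if_neg ha, Finset.sum_singleton,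
      MvPolynomial.coeff_monomial, if_pos rfl]

lemma l1_monomial_mul_le (c : σ →₀ ℕ) (a : ℚ) (q : MvPolynomial σ ℚ) :
    l1 (monomial c a * q) ≤ |a| * l1 q := by
  classical
  conv_lhs => rw [q.as_sum, Finset.mul_sum]
  refine (l1_sum_le _ _).trans ?_
  rw [l1, Finset.mul_sum]
  refine Finset.sum_le_sum fun e _ => ?_
  rw [MvPolynomial.monomial_mul]
  exact (l1_monomial_le _ _).trans (by rw [abs_mul])

lemma l1_mul_le (p q : MvPolynomial σ ℚ) : l1 (p * q) ≤ l1 p * l1 q := by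
  classical
  conv_lhs => rw [p.as_sum, Finset.sum_mul]
  refine (l1_sum_le _ _).trans ?_
  rw [l1, Finset.sum_mul]
  exact Finset.sum_le_sum fun c _ => l1_monomial_mul_le _ _ _

lemma l1_one_le : l1 (1 : MvPolynomial σ ℚ) ≤ 1 := by
  have := l1_monomial_le (0 : σ →₀ ℕ) (1 : ℚ)
  simpa using this

lemma l1_pow_le (p : MvPolynomial σ ℚ) (n : ℕ) : l1 (p ^ n) ≤ l1 p ^ n := by
  induction n with
  | zero => simpa using l1_one_le
  | succ n ih =>
    rw [pow_succ, pow_succ]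
    exact (l1_mul_le _ _).trans (mul_le_mul_of_nonneg_right ih (l1_nonneg p))

lemma l1_prod_le {ι : Type*} (s : Finset ι) (f : ι → MvPolynomial σ ℚ) :
    l1 (∏ i ∈ s, f i) ≤ ∏ i ∈ s, l1 (f i) := by
  classical
  induction s using Finset.induction with
  | empty => simpa using l1_one_le
  | insert _ _ hx ih =>
    rw [Finset.prod_insert hx, Finset.prod_insert hx]
    refine (l1_mul_le _ _).trans ?_
    exact mul_le_mul_of_nonneg_left ih (l1_nonneg _)

lemma l1_X_le (i : σ) : l1 (X i : MvPolynomial σ ℚ) ≤ 1 := by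
  have := l1_monomial_le (Finsupp.single i 1) (1 : ℚ)
  simpa [MvPolynomial.X] using this


lemma aeval_aeval (f : σ → MvPolynomial τ ℚ) (x : τ → ℝ) (p : MvPolynomial σ ℚ) :
    aeval x (aeval f p) = aeval (fun v => aeval x (f v)) p := by
  induction p using MvPolynomial.induction_on with
  | C a => simp
  | add p q hp hq => simp only [map_add, hp, hq]
  | mul_X p i hp => simp only [map_mul, aeval_X, hp]

lemma totalDegree_aeval_le (p : MvPolynomial σ ℚ) (f : σ → MvPolynomial τ ℚ) (d : ℕ)
    (h : ∀ v ∈ p.vars, (f v).totalDegree ≤ d) :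
    (aeval f p).totalDegree ≤ d * p.totalDegree := by
  classical
  conv_lhs => rw [p.as_sum, map_sum]
  refine totalDegree_finsetSum_le fun c hc => ?_
  rw [aeval_monomial]
  refine (totalDegree_mul _ _).trans ?_
  have h1 : (algebraMap ℚ (MvPolynomial τ ℚ) (coeff c p)).totalDegree = 0 := by
    rw [MvPolynomial.algebraMap_eq, totalDegree_C]
  rw [h1, zero_add, Finsupp.prod]
  refine (totalDegree_finset_prod _ _).trans ?_
  have h2 : ∀ v ∈ c.support, ((f v) ^ (c v)).totalDegree ≤ c v * d := fun v hv =>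
    (totalDegree_pow _ _).trans
      (Nat.mul_le_mul_left _ (h v ((mem_vars v).mpr ⟨c, hc, hv⟩)))
  refine (Finset.sum_le_sum h2).trans ?_
  rw [← Finset.sum_mul]
  have h3 : (∑ v ∈ c.support, c v) ≤ p.totalDegree := le_totalDegree hc
  calc (∑ v ∈ c.support, c v) * d ≤ p.totalDegree * d := Nat.mul_le_mul_right _ h3
    _ = d * p.totalDegree := Nat.mul_comm _ _

lemma l1_aeval_le (p : MvPolynomial σ ℚ) (f : σ → MvPolynomial τ ℚ) (M : ℚ)
    (hM : 1 ≤ M) (h : ∀ v ∈ p.vars, l1 (f v) ≤ M) :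
    l1 (aeval f p) ≤ l1 p * M ^ p.totalDegree := by
  classical
  conv_lhs => rw [p.as_sum, map_sum]
  refine (l1_sum_le _ _).trans ?_
  rw [l1, Finset.sum_mul]
  refine Finset.sum_le_sum fun c hc => ?_
  rw [aeval_monomial]
  refine (l1_mul_le _ _).trans ?_
  have h1 : l1 (algebraMap ℚ (MvPolynomial τ ℚ) (coeff c p)) ≤ |coeff c p| := by
    rw [MvPolynomial.algebraMap_eq, MvPolynomial.C_apply]
    exact l1_monomial_le _ _
  have h2 : l1 (c.prod fun v e => f v ^ e) ≤ M ^ p.totalDegree := by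
    rw [Finsupp.prod]
    refine (l1_prod_le _ _).trans ?_
    have h3 : ∀ v ∈ c.support, l1 (f v ^ c v) ≤ M ^ c v := fun v hv =>
      (l1_pow_le _ _).trans
        (pow_le_pow_left₀ (l1_nonneg _) (h v ((mem_vars v).mpr ⟨c, hc, hv⟩)) _)
    refine (Finset.prod_le_prod (fun v _ => l1_nonneg _) h3).trans ?_
    rw [Finset.prod_pow_eq_pow_sum]
    exact pow_le_pow_right₀ hM (le_totalDegree hc)
  exact mul_le_mul h1 h2 (l1_nonneg _) (abs_nonneg _)

end MalcevAux
open Filter Topology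

noncomputable section

/-- The Mal'cev multiplication law on `ℝ^m` determined by the polynomials `P i`:
`(s * t) i = s i + t i + P i (s, t)`.  (With `P 0 = 0` this matches
`(s*t)_1 = s_1 + t_1`.) -/
noncomputable def malStar {m : ℕ} (P : Fin m → MvPolynomial (Fin m ⊕ Fin m) ℚ)
    (s t : Fin m → ℝ) : Fin m → ℝ :=
  fun i => s i + t i + MvPolynomial.aeval (Sum.elim s t) (P i)

/-- `malPow P x n = x^{*n}` for `n ≥ 1` (with the junk value `x` at `n = 0`):
`x^{*1} = x` and `x^{*(n+1)} = x * x^{*n}`. -/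
noncomputable def malPow {m : ℕ} (P : Fin m → MvPolynomial (Fin m ⊕ Fin m) ℚ)
    (x : Fin m → ℝ) : ℕ → (Fin m → ℝ)
  | 0 => x
  | 1 => x
  | (n + 2) => malStar P x (malPow P x (n + 1))

open MvPolynomial in
noncomputable def malQ {m : ℕ} (P : Fin m → MvPolynomial (Fin m ⊕ Fin m) ℚ) :
    ℕ → Fin m → MvPolynomial (Fin m) ℚ
  | 0 => fun i => MvPolynomial.X i
  | (n+1) => fun i => MvPolynomial.X i + malQ P n i +
      MvPolynomial.aeval (Sum.elim MvPolynomial.X (malQ P n)) (P i)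

lemma malPow_eq_aeval_malQ {m : ℕ} (P : Fin m → MvPolynomial (Fin m ⊕ Fin m) ℚ)
    (x : Fin m → ℝ) : ∀ n, ∀ i, malPow P x (n+1) i = MvPolynomial.aeval x (malQ P n i) := by
  intro n
  induction n with
  | zero => intro i; simp [malPow, malQ]
  | succ n ih =>
    intro i
    have hfun : (fun v => MvPolynomial.aeval x (Sum.elim MvPolynomial.X (malQ P n) v))
        = Sum.elim x (malPow P x (n+1)) := by
      funext v
      cases v with
      | inl j => simp
      | inr j => simp [ih j]
    have hstep : malPow P x (n+1+1) i
        = x i + malPow P x (n+1) i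
          + MvPolynomial.aeval (Sum.elim x (malPow P x (n+1))) (P i) := rfl
    rw [hstep]
    show _ = MvPolynomial.aeval x (MvPolynomial.X i + malQ P n i +
      MvPolynomial.aeval (Sum.elim MvPolynomial.X (malQ P n)) (P i))
    rw [map_add, map_add, MalcevAux.aeval_aeval, hfun, MvPolynomial.aeval_X, ih i]

open MvPolynomial in
lemma malQ_totalDegree_le {m k : ℕ} (hk : 2 ≤ k)
    (P : Fin m → MvPolynomial (Fin m ⊕ Fin m) ℚ)
    (hP0 : ∀ i : Fin m, (i : ℕ) = 0 → P i = 0)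
    (hPdeg : ∀ i, (P i).totalDegree ≤ k - 1)
    (hPvars : ∀ i : Fin m, ∀ v ∈ (P i).vars, Sum.elim Fin.val Fin.val v < (i : ℕ)) :
    ∀ n (i : Fin m), (malQ P n i).totalDegree ≤ k ^ (i : ℕ) := by
  have hk1 : 1 ≤ k ^ 1 := by simpa using (by omega : 1 ≤ k)
  have hone : ∀ j : ℕ, 1 ≤ k ^ j := fun j => Nat.one_le_pow _ _ (by omega)
  intro n
  induction n with
  | zero =>
    intro i
    simpa [malQ] using (hone (i : ℕ))
  | succ n ih =>
    intro i
    show (MvPolynomial.X i + malQ P n i +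
      MvPolynomial.aeval (Sum.elim MvPolynomial.X (malQ P n)) (P i)).totalDegree ≤ k ^ (i:ℕ)
    refine (totalDegree_add _ _).trans (max_le ((totalDegree_add _ _).trans
      (max_le ?_ (ih i))) ?_)
    · simpa using hone (i : ℕ)
    · by_cases hi : (i : ℕ) = 0
      · rw [hP0 i hi]; simp
      · have hvars : ∀ v ∈ (P i).vars,
            ((Sum.elim MvPolynomial.X (malQ P n) v : MvPolynomial (Fin m) ℚ)).totalDegree
              ≤ k ^ ((i:ℕ) - 1) := by
          intro v hv
          cases v with
          | inl j => simpa using hone ((i:ℕ) - 1)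
          | inr j =>
            have hj : (j : ℕ) < (i : ℕ) := hPvars i _ hv
            exact (ih j).trans (Nat.pow_le_pow_right (by omega) (by omega))
        refine (MalcevAux.totalDegree_aeval_le (P i) _ _ hvars).trans ?_
        calc k ^ ((i:ℕ)-1) * (P i).totalDegree
            ≤ k ^ ((i:ℕ)-1) * (k-1) := Nat.mul_le_mul_left _ (hPdeg i)
          _ ≤ k ^ ((i:ℕ)-1) * k := Nat.mul_le_mul_left _ (by omega)
          _ = k ^ (((i:ℕ)-1)+1) := (pow_succ k _).symm
          _ = k ^ (i:ℕ) := by congr 1; omega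

open MvPolynomial in
lemma malQ_l1_bound {m k : ℕ} (hk : 2 ≤ k)
    (P : Fin m → MvPolynomial (Fin m ⊕ Fin m) ℚ)
    (hPdeg : ∀ i, (P i).totalDegree ≤ k - 1)
    (hPvars : ∀ i : Fin m, ∀ v ∈ (P i).vars, Sum.elim Fin.val Fin.val v < (i : ℕ)) :
    ∀ N : ℕ, ∃ c : ℚ, ∃ e : ℕ, 1 ≤ c ∧
      ∀ n, ∀ i : Fin m, (i : ℕ) < N →
        MalcevAux.l1 (malQ P n i) ≤ c * ((n : ℚ) + 1) ^ e := by
  intro N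
  induction N with
  | zero => exact ⟨1, 0, le_rfl, fun n i hi => absurd hi (Nat.not_lt_zero _)⟩
  | succ N ih =>
    obtain ⟨c, e, hc, hb⟩ := ih
    set L : ℚ := ∑ j, MalcevAux.l1 (P j) with hLdef
    have hL : 0 ≤ L := Finset.sum_nonneg fun _ _ => MalcevAux.l1_nonneg _
    set A : ℚ := 1 + L * c ^ (k-1) with hAdef
    have hcpow : (0:ℚ) ≤ c ^ (k-1) := pow_nonneg (by linarith) _
    have hA1 : 1 ≤ A := by nlinarith
    set E : ℕ := e * (k-1) with hEdef
    refine ⟨A + c, (E + 1) + e, by linarith, fun n i hi => ?_⟩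
    have hn1 : (1:ℚ) ≤ (n : ℚ) + 1 := by have := Nat.cast_nonneg (α:=ℚ) n; linarith
    have hpow1 : ∀ a b : ℕ, a ≤ b → ((n:ℚ)+1) ^ a ≤ ((n:ℚ)+1) ^ b :=
      fun a b hab => pow_le_pow_right₀ hn1 hab
    have hpows : ∀ a : ℕ, (1:ℚ) ≤ ((n:ℚ)+1) ^ a := fun a => one_le_pow₀ hn1
    by_cases hiN : (i : ℕ) < N
    · calc MalcevAux.l1 (malQ P n i) ≤ c * ((n:ℚ)+1) ^ e := hb n i hiN
        _ ≤ (A + c) * ((n:ℚ)+1) ^ ((E+1)+e) := by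
            have := hpow1 e ((E+1)+e) (by omega)
            nlinarith [hpows e]
    · -- (i : ℕ) = N
      have hiN' : (i : ℕ) = N := by omega
      have key : ∀ n : ℕ, MalcevAux.l1 (malQ P n i) ≤ A * ((n:ℚ)+1) ^ (E+1) := by
        intro n
        induction n with
        | zero =>
          have h1 : MalcevAux.l1 (malQ P 0 i) ≤ 1 := MalcevAux.l1_X_le i
          have h2 : (1:ℚ) ≤ ((0:ℚ)+1) ^ (E+1) := by norm_num
          calc MalcevAux.l1 (malQ P 0 i) ≤ 1 := h1
            _ ≤ A * (((0:ℕ):ℚ)+1) ^ (E+1) := by push_cast; nlinarith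
        | succ n ihn =>
          have hn1' : (1:ℚ) ≤ (n : ℚ) + 1 := by have := Nat.cast_nonneg (α:=ℚ) n; linarith
          set t : ℚ := (n : ℚ) + 1 with htdef
          have htpos : 0 < t := by positivity
          have htpows : ∀ a : ℕ, (1:ℚ) ≤ t ^ a := fun a => one_le_pow₀ hn1'
          set M : ℚ := c * t ^ e with hMdef
          have hM1 : 1 ≤ M := by nlinarith [htpows e]
          have hvars : ∀ v ∈ (P i).vars,
              MalcevAux.l1 ((Sum.elim MvPolynomial.X (malQ P n) v :
                MvPolynomial (Fin m) ℚ)) ≤ M := by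
            intro v hv
            cases v with
            | inl j => exact (MalcevAux.l1_X_le j).trans hM1
            | inr j =>
              have hj : (j : ℕ) < (i : ℕ) := hPvars i _ hv
              exact hb n j (by omega)
          have hcomp : MalcevAux.l1
              (MvPolynomial.aeval (Sum.elim MvPolynomial.X (malQ P n)) (P i))
                ≤ L * M ^ (k-1) := by
            refine (MalcevAux.l1_aeval_le (P i) _ M hM1 hvars).trans ?_
            have h1 : MalcevAux.l1 (P i) ≤ L :=
              Finset.single_le_sum (fun j _ => MalcevAux.l1_nonneg (P j))
                (Finset.mem_univ i)
            have h2 : M ^ (P i).totalDegree ≤ M ^ (k-1) :=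
              pow_le_pow_right₀ hM1 (hPdeg i)
            exact mul_le_mul h1 h2 (pow_nonneg (by linarith) _) (by linarith)
          have hMpow : M ^ (k-1) = c ^ (k-1) * t ^ E := by
            rw [hMdef, mul_pow, ← pow_mul, hEdef]
          have hstep : MalcevAux.l1 (malQ P (n+1) i)
              ≤ 1 + MalcevAux.l1 (malQ P n i) + L * M ^ (k-1) := by
            show MalcevAux.l1 (MvPolynomial.X i + malQ P n i +
              MvPolynomial.aeval (Sum.elim MvPolynomial.X (malQ P n)) (P i)) ≤ _
            refine (MalcevAux.l1_add_le _ _).trans ?_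
            have := (MalcevAux.l1_add_le (MvPolynomial.X i) (malQ P n i))
            have hXi := MalcevAux.l1_X_le (σ := Fin m) i
            linarith [hcomp]
          have hmono : t ^ E ≤ (t+1) ^ E :=
            pow_le_pow_left₀ (by linarith) (by linarith) _
          have hmono1 : t ^ (E+1) ≤ (t+1) ^ E * t := by
            rw [pow_succ]
            exact mul_le_mul_of_nonneg_right hmono (by linarith)
          calc MalcevAux.l1 (malQ P (n+1) i)
              ≤ 1 + A * t ^ (E+1) + L * M ^ (k-1) := by linarith [hstep, ihn]
            _ = 1 + L * c ^ (k-1) * t ^ E + A * t ^ (E+1) := by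
                rw [hMpow]; ring
            _ ≤ A * t ^ E + A * t ^ (E+1) := by nlinarith [htpows E, hL, hcpow]
            _ ≤ A * (t+1) ^ E + A * ((t+1) ^ E * t) := by nlinarith [hmono, hmono1]
            _ = A * (t+1) ^ (E+1) := by rw [pow_succ]; ring
            _ = A * (((n+1 : ℕ):ℚ)+1) ^ (E+1) := by push_cast; rw [htdef]
      calc MalcevAux.l1 (malQ P n i) ≤ A * ((n:ℚ)+1) ^ (E+1) := key n
        _ ≤ (A + c) * ((n:ℚ)+1) ^ ((E+1)+e) := by
            have := hpow1 (E+1) ((E+1)+e) (by omega)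
            nlinarith [hpows (E+1)]

/-- Lemma 4.3 of the paper (1-step data): in Mal'cev coordinates with multiplication
given by polynomials `P i` of degree at most `k - 1`, the coordinates of `x^{*n}` are
polynomials `Q i n` over `ℚ` of degree `< k^m`, whose coefficients have absolute values
summing to at most `R(n)` for some polynomial `R` with nonnegative coefficients. -/
theorem malcev_powers_polynomial (k m : ℕ) (hk : 2 ≤ k) (hm : 1 ≤ m)
    (P : Fin m → MvPolynomial (Fin m ⊕ Fin m) ℚ)
    (hP0 : ∀ i : Fin m, (i : ℕ) = 0 → P i = 0)
    (hPdeg : ∀ i, (P i).totalDegree ≤ k - 1)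
    (hPvars : ∀ i : Fin m, ∀ v ∈ (P i).vars, Sum.elim Fin.val Fin.val v < (i : ℕ)) :
    ∃ (R : Polynomial ℝ) (Q : Fin m → ℕ → MvPolynomial (Fin m) ℚ),
      (∀ j, 0 ≤ R.coeff j) ∧
      (∀ (x : Fin m → ℝ) (n : ℕ), 1 ≤ n → ∀ i : Fin m,
        malPow P x n i = MvPolynomial.aeval x (Q i n)) ∧
      (∀ (i : Fin m) (n : ℕ), 1 ≤ n → (Q i n).totalDegree < k ^ m) ∧
      (∀ (i : Fin m) (n : ℕ), 1 ≤ n →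
        ((∑ c ∈ (Q i n).support, |(Q i n).coeff c| : ℚ) : ℝ) ≤ R.eval (n : ℝ)) := by
  obtain ⟨c, e, hc, hb⟩ := malQ_l1_bound hk P hPdeg hPvars m
  refine ⟨Polynomial.C ((c:ℝ)) * Polynomial.X ^ e, fun i n => malQ P (n-1) i, ?_, ?_, ?_, ?_⟩
  · intro j
    rw [Polynomial.coeff_C_mul, Polynomial.coeff_X_pow]
    have hc0 : (0:ℝ) ≤ (c:ℝ) := by exact_mod_cast (by linarith : (0:ℚ) ≤ c)
    split_ifs <;> simp [hc0]
  · intro x n hn i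
    obtain ⟨n', rfl⟩ : ∃ n', n = n' + 1 := ⟨n - 1, by omega⟩
    simpa using malPow_eq_aeval_malQ P x n' i
  · intro i n hn
    have h1 := malQ_totalDegree_le hk P hP0 hPdeg hPvars (n-1) i
    have h2 : k ^ (i:ℕ) ≤ k ^ (m-1) := Nat.pow_le_pow_right (by omega) (by omega)
    have h3 : k ^ (m-1) < k ^ m := Nat.pow_lt_pow_right (by omega) (by omega)
    show (malQ P (n-1) i).totalDegree < k ^ m
    omega
  · intro i n hn
    have h1 := hb (n-1) i i.isLt
    have h2 : (((n-1 : ℕ):ℚ) + 1) = (n:ℚ) := by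
      rw [Nat.cast_sub hn]; push_cast; ring
    rw [h2] at h1
    have h3 : ((MalcevAux.l1 (malQ P (n-1) i) : ℚ) : ℝ) ≤ ((c * (n:ℚ)^e : ℚ) : ℝ) := by
      exact_mod_cast h1
    simpa [MalcevAux.l1, Polynomial.eval_mul, Polynomial.eval_pow] using h3
end
end

section
/- Fix integers k ≥ 1 and m ≥ 1 and polynomials P_1, …, P_{m−1}, where P_i ∈ ℚ[s_1,…,s_i,t_1,…,t_i] has total degree at most k−1, defining the operation * on ℝ^m as in the context. Then: (i) for every x ∈ ℝ^m there is a unique z(x) = (z_1(x),…,z_m(x)) ∈ ℤ^m such that x * z(x) ∈ [0,1)^m; (ii) there exist constants C > 0 and N_0 > 0 such that for every x ∈ ℝ^m with max_{1≤i≤m}|x_i| > N_0 one has |z_i(x)| ≤ C (max_{1≤i≤m}|x_i|)^{k^{m−1}} for every 1 ≤ i ≤ m. -/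
open Filter Topology

noncomputable section

open MvPolynomial

lemma aeval_congr_vars' {σ : Type*} (p : MvPolynomial σ ℚ) (f g : σ → ℝ)
    (h : ∀ v ∈ p.vars, f v = g v) :
    MvPolynomial.aeval f p = MvPolynomial.aeval g p := by
  show eval₂Hom (algebraMap ℚ ℝ) f p = eval₂Hom (algebraMap ℚ ℝ) g p
  exact eval₂Hom_congr' rfl (fun i hi _ => h i hi) rfl

lemma abs_aeval_le' {σ : Type*} (p : MvPolynomial σ ℚ) (f : σ → ℝ) (B : ℝ) (hB : 1 ≤ B)
    (hf : ∀ v, |f v| ≤ B) :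
    |MvPolynomial.aeval f p| ≤
      (∑ d ∈ p.support, |((p.coeff d : ℚ) : ℝ)|) * B ^ p.totalDegree := by
  have hB0 : (0:ℝ) ≤ B := le_trans zero_le_one hB
  rw [MvPolynomial.aeval_def, MvPolynomial.eval₂_eq]
  calc |∑ d ∈ p.support, (algebraMap ℚ ℝ) (p.coeff d) * ∏ i ∈ d.support, f i ^ d i|
      ≤ ∑ d ∈ p.support, |(algebraMap ℚ ℝ) (p.coeff d) * ∏ i ∈ d.support, f i ^ d i| :=
        Finset.abs_sum_le_sum_abs _ _
    _ ≤ ∑ d ∈ p.support, |((p.coeff d : ℚ) : ℝ)| * B ^ p.totalDegree := by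
        apply Finset.sum_le_sum
        intro d hd
        rw [abs_mul]
        apply mul_le_mul_of_nonneg_left _ (abs_nonneg _)
        calc |∏ i ∈ d.support, f i ^ d i| = ∏ i ∈ d.support, |f i| ^ d i := by
              rw [Finset.abs_prod]; exact Finset.prod_congr rfl fun i _ => abs_pow _ _
          _ ≤ ∏ i ∈ d.support, B ^ d i :=
              Finset.prod_le_prod (fun i _ => by positivity)
                (fun i _ => pow_le_pow_left₀ (abs_nonneg _) (hf i) _)
          _ = B ^ (d.sum fun _ n => n) := by
              rw [Finsupp.sum, ← Finset.prod_pow_eq_pow_sum]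
          _ ≤ B ^ p.totalDegree := pow_le_pow_right₀ hB (le_totalDegree hd)
    _ = (∑ d ∈ p.support, |((p.coeff d : ℚ) : ℝ)|) * B ^ p.totalDegree := by
        rw [Finset.sum_mul]

noncomputable def zfun {m : ℕ} (P : Fin m → MvPolynomial (Fin m ⊕ Fin m) ℚ)
    (x : Fin m → ℝ) (i : Fin m) : ℤ :=
  -⌊x i + MvPolynomial.aeval
      (Sum.elim x (fun (j : Fin m) => if h : (j : ℕ) < (i : ℕ) then ((zfun P x j : ℤ) : ℝ) else 0))
      (P i)⌋
termination_by (i : ℕ)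
decreasing_by exact h

section Main

variable {m : ℕ} (P : Fin m → MvPolynomial (Fin m ⊕ Fin m) ℚ)

lemma Q_congr (hPvars : ∀ i : Fin m, ∀ v ∈ (P i).vars, Sum.elim Fin.val Fin.val v < (i : ℕ))
    (i : Fin m) (x f g : Fin m → ℝ)
    (h : ∀ j : Fin m, (j : ℕ) < (i : ℕ) → f j = g j) :
    MvPolynomial.aeval (Sum.elim x f) (P i) = MvPolynomial.aeval (Sum.elim x g) (P i) := by
  apply aeval_congr_vars'
  intro v hv
  have hlt := hPvars i v hv
  cases v with
  | inl a => rfl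
  | inr b => exact h b hlt

variable (hPvars : ∀ i : Fin m, ∀ v ∈ (P i).vars, Sum.elim Fin.val Fin.val v < (i : ℕ))
include hPvars

lemma zfun_eq (x : Fin m → ℝ) (i : Fin m) :
    zfun P x i = -⌊x i + MvPolynomial.aeval
      (Sum.elim x (fun j => ((zfun P x j : ℤ) : ℝ))) (P i)⌋ := by
  have hq : MvPolynomial.aeval
      (Sum.elim x (fun (j : Fin m) => if h : (j : ℕ) < (i : ℕ) then ((zfun P x j : ℤ) : ℝ) else 0))
      (P i) = MvPolynomial.aeval (Sum.elim x (fun j => ((zfun P x j : ℤ) : ℝ))) (P i) :=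
    Q_congr P hPvars i x _ _ (fun j hj => by simp [hj])
  rw [zfun, hq]

lemma zfun_spec (x : Fin m → ℝ) (i : Fin m) :
    malStar P x (fun j => ((zfun P x j : ℤ) : ℝ)) i ∈ Set.Ico (0 : ℝ) 1 := by
  set r := x i + MvPolynomial.aeval (Sum.elim x (fun j => ((zfun P x j : ℤ) : ℝ))) (P i) with hr
  have h1 : malStar P x (fun j => ((zfun P x j : ℤ) : ℝ)) i = r + ((zfun P x i : ℤ) : ℝ) := by
    simp only [malStar, hr]; ring
  rw [h1, zfun_eq P hPvars]
  push_cast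
  constructor
  · have := Int.fract_nonneg r
    rw [Int.fract] at this; linarith
  · have := Int.fract_lt_one r
    rw [Int.fract] at this; linarith

omit hPvars in
lemma int_add_unique (r : ℝ) (a b : ℤ) (ha : r + a ∈ Set.Ico (0:ℝ) 1)
    (hb : r + b ∈ Set.Ico (0:ℝ) 1) : a = b := by
  obtain ⟨ha1, ha2⟩ := ha
  obtain ⟨hb1, hb2⟩ := hb
  have : |(a : ℝ) - b| < 1 := by rw [abs_sub_lt_iff]; constructor <;> linarith
  have h2 : ((a - b : ℤ) : ℝ) = 0 := by
    have := Int.abs_lt_one_iff.mp (by exact_mod_cast (by push_cast; exact this : |((a - b : ℤ) : ℝ)| < 1))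
    exact_mod_cast this
  have : a - b = 0 := by exact_mod_cast h2
  omega

lemma zfun_unique (x : Fin m → ℝ) (z : Fin m → ℤ)
    (hz : ∀ i, malStar P x (fun j => ((z j : ℤ) : ℝ)) i ∈ Set.Ico (0 : ℝ) 1) :
    z = zfun P x := by
  have key : ∀ n : ℕ, ∀ i : Fin m, (i : ℕ) = n → z i = zfun P x i := by
    intro n
    induction n using Nat.strong_induction_on with
    | _ n ih =>
      intro i hn
      subst hn
      have hQ : MvPolynomial.aeval (Sum.elim x (fun j => ((z j : ℤ) : ℝ))) (P i)
          = MvPolynomial.aeval (Sum.elim x (fun j => ((zfun P x j : ℤ) : ℝ))) (P i) := by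
        apply Q_congr P hPvars
        intro j hj
        exact_mod_cast congrArg (fun t => ((t : ℤ) : ℝ)) (ih (j : ℕ) hj j rfl)
      have h1 := hz i
      have h2 := zfun_spec P hPvars x i
      simp only [malStar] at h1 h2
      rw [hQ] at h1
      set r := MvPolynomial.aeval (Sum.elim x (fun j => ((zfun P x j : ℤ) : ℝ))) (P i) with hrdef
      apply int_add_unique (x i + r)
      · have : x i + r + ((z i : ℤ) : ℝ) = x i + ((z i : ℤ) : ℝ) + r := by ring
        rw [this]; exact h1
      · have : x i + r + ((zfun P x i : ℤ) : ℝ) = x i + ((zfun P x i : ℤ) : ℝ) + r := by ring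
        rw [this]; exact h2
  funext i
  exact key _ i rfl

end Main

lemma zbound {m k : ℕ} (hk : 1 ≤ k) (P : Fin m → MvPolynomial (Fin m ⊕ Fin m) ℚ)
    (hP0 : ∀ i : Fin m, (i : ℕ) = 0 → P i = 0)
    (hPdeg : ∀ i, (P i).totalDegree ≤ k - 1)
    (hPvars : ∀ i : Fin m, ∀ v ∈ (P i).vars, Sum.elim Fin.val Fin.val v < (i : ℕ)) :
    ∀ i : Fin m, ∃ C : ℝ, 1 ≤ C ∧ ∀ x : Fin m → ℝ, 1 ≤ ‖x‖ →
      ∀ z : Fin m → ℤ, (∀ i, malStar P x (fun j => ((z j : ℤ) : ℝ)) i ∈ Set.Ico (0 : ℝ) 1) →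
      |((z i : ℤ) : ℝ)| ≤ C * ‖x‖ ^ (k ^ (i : ℕ)) := by
  suffices key : ∀ n : ℕ, ∀ i : Fin m, (i : ℕ) = n → ∃ C : ℝ, 1 ≤ C ∧ ∀ x : Fin m → ℝ, 1 ≤ ‖x‖ →
      ∀ z : Fin m → ℤ, (∀ i, malStar P x (fun j => ((z j : ℤ) : ℝ)) i ∈ Set.Ico (0 : ℝ) 1) →
      |((z i : ℤ) : ℝ)| ≤ C * ‖x‖ ^ (k ^ (i : ℕ)) by
    intro i; exact key _ i rfl
  intro n
  induction n using Nat.strong_induction_on with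
  | _ n ih =>
  intro i hn
  subst hn
  -- choose constants for smaller indices
  have hCf : ∃ Cf : Fin m → ℝ, (∀ j, 1 ≤ Cf j) ∧ ∀ j : Fin m, (j : ℕ) < (i : ℕ) →
      ∀ x : Fin m → ℝ, 1 ≤ ‖x‖ →
      ∀ z : Fin m → ℤ, (∀ i, malStar P x (fun j => ((z j : ℤ) : ℝ)) i ∈ Set.Ico (0 : ℝ) 1) →
      |((z j : ℤ) : ℝ)| ≤ Cf j * ‖x‖ ^ (k ^ (j : ℕ)) := by
    choose Cf h1 h2 using fun j : Fin m => fun h : (j : ℕ) < (i : ℕ) => ih (j : ℕ) h j rfl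
    refine ⟨fun j => if h : (j : ℕ) < (i : ℕ) then Cf j h else 1, fun j => ?_, fun j hj => ?_⟩
    · by_cases h : (j : ℕ) < (i : ℕ) <;> simp [h, h1]
    · simpa [hj] using h2 j hj
  obtain ⟨Cf, hCf1, hCfb⟩ := hCf
  set D : ℝ := ∑ j : Fin m, Cf j with hD
  have hCf0 : ∀ j : Fin m, 0 ≤ Cf j := fun j => le_trans zero_le_one (hCf1 j)
  have hDj : ∀ j : Fin m, Cf j ≤ D :=
    fun j => Finset.single_le_sum (fun j _ => hCf0 j) (Finset.mem_univ j)
  have hD1 : 1 ≤ D := le_trans (hCf1 i) (hDj i)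
  set A : ℝ := ∑ d ∈ (P i).support, |(((P i).coeff d : ℚ) : ℝ)| with hA
  have hA0 : 0 ≤ A := Finset.sum_nonneg fun d _ => abs_nonneg _
  refine ⟨A * D ^ (k - 1) + 2, by nlinarith [pow_nonneg (le_trans zero_le_one hD1) (k-1)], ?_⟩
  intro x hx z hz
  set R : ℝ := ‖x‖ with hR
  have hR0 : (0:ℝ) ≤ R := le_trans zero_le_one hx
  have hxi : ∀ j : Fin m, |x j| ≤ R := by
    intro j; rw [← Real.norm_eq_abs]; exact norm_le_pi_norm x j
  -- bound the polynomial term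
  set q : ℝ := MvPolynomial.aeval (Sum.elim x (fun j => ((z j : ℤ) : ℝ))) (P i) with hq
  have hqbound : |q| ≤ A * D ^ (k - 1) * R ^ (k ^ (i : ℕ)) := by
    rcases Nat.eq_zero_or_pos (i : ℕ) with h0 | hipos
    · rw [hq, hP0 i h0]
      simp only [map_zero, abs_zero]
      positivity
    · set E : ℕ := k ^ ((i : ℕ) - 1) with hE
      have hE1 : 1 ≤ E := Nat.one_le_pow _ _ hk
      set B : ℝ := D * R ^ E with hB
      have hRE : (1:ℝ) ≤ R ^ E := one_le_pow₀ hx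
      have hB1 : 1 ≤ B := by
        calc (1:ℝ) = 1 * 1 := by ring
        _ ≤ D * R ^ E := by
            apply mul_le_mul hD1 hRE zero_le_one (le_trans zero_le_one hD1)
      set g : Fin m → ℝ := fun j => if (j : ℕ) < (i : ℕ) then ((z j : ℤ) : ℝ) else 0 with hg
      have hQeq : q = MvPolynomial.aeval (Sum.elim x g) (P i) := by
        rw [hq]
        apply Q_congr P hPvars
        intro j hj
        simp only [hg]
        exact (if_pos hj).symm
      have hinput : ∀ v : Fin m ⊕ Fin m, |Sum.elim x g v| ≤ B := by
        intro v
        cases v with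
        | inl a =>
          calc |Sum.elim x g (Sum.inl a)| = |x a| := rfl
          _ ≤ R := hxi a
          _ = 1 * R ^ 1 := by ring
          _ ≤ D * R ^ E := by
              apply mul_le_mul hD1 (pow_le_pow_right₀ hx hE1) (by positivity)
                (le_trans zero_le_one hD1)
        | inr b =>
          by_cases hb : (b : ℕ) < (i : ℕ)
          · have hzb := hCfb b hb x hx z hz
            have hkb : k ^ (b : ℕ) ≤ E := Nat.pow_le_pow_right hk (by omega)
            calc |Sum.elim x g (Sum.inr b)| = |((z b : ℤ) : ℝ)| := by
                  simp only [hg, Sum.elim_inr]; rw [if_pos hb]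
            _ ≤ Cf b * R ^ (k ^ (b : ℕ)) := hzb
            _ ≤ D * R ^ E := by
                apply mul_le_mul (hDj b) (pow_le_pow_right₀ hx hkb) (by positivity) (hCf0 b |>.trans (hDj b))
          · have : Sum.elim x g (Sum.inr b) = 0 := by
              simp only [hg, Sum.elim_inr]; rw [if_neg hb]
            rw [this, abs_zero]
            exact le_trans zero_le_one hB1
      have h1 := abs_aeval_le' (P i) (Sum.elim x g) B hB1 hinput
      rw [← hQeq, ← hA] at h1
      have h2 : B ^ (P i).totalDegree ≤ B ^ (k - 1) := pow_le_pow_right₀ hB1 (hPdeg i)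
      have h3 : B ^ (k - 1) = D ^ (k - 1) * R ^ (E * (k - 1)) := by
        rw [hB, mul_pow, ← pow_mul]
      have h4 : E * (k - 1) ≤ k ^ (i : ℕ) := by
        calc E * (k - 1) ≤ E * k := Nat.mul_le_mul_left _ (by omega)
        _ = k ^ ((i : ℕ) - 1 + 1) := by rw [hE, pow_succ]
        _ = k ^ (i : ℕ) := by congr 1; omega
      have h5 : R ^ (E * (k - 1)) ≤ R ^ (k ^ (i : ℕ)) := pow_le_pow_right₀ hx h4
      calc |q| ≤ A * B ^ (P i).totalDegree := h1
      _ ≤ A * B ^ (k - 1) := mul_le_mul_of_nonneg_left h2 hA0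
      _ = A * (D ^ (k - 1) * R ^ (E * (k - 1))) := by rw [h3]
      _ ≤ A * (D ^ (k - 1) * R ^ (k ^ (i : ℕ))) := by
          apply mul_le_mul_of_nonneg_left _ hA0
          exact mul_le_mul_of_nonneg_left h5 (by positivity)
      _ = A * D ^ (k - 1) * R ^ (k ^ (i : ℕ)) := by ring
  -- conclude
  have hmem := hz i
  simp only [malStar, ← hq, Set.mem_Ico] at hmem
  obtain ⟨hm1, hm2⟩ := hmem
  have hRk : (1:ℝ) ≤ R ^ (k ^ (i : ℕ)) := one_le_pow₀ hx
  have hRk2 : R ≤ R ^ (k ^ (i : ℕ)) := le_self_pow₀ hx (Nat.one_le_iff_ne_zero.mp (Nat.one_le_pow _ _ hk))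
  have hxiR := hxi i
  rw [abs_le]
  have e1 := neg_abs_le (x i)
  have e2 := neg_abs_le q
  have e3 := le_abs_self (x i)
  have e4 := le_abs_self q
  constructor
  · nlinarith [hA0, pow_nonneg (le_trans zero_le_one hD1) (k-1), abs_nonneg q]
  · nlinarith [hA0, pow_nonneg (le_trans zero_le_one hD1) (k-1), abs_nonneg q]

/-- Proposition 4.5 of the paper: (i) for every `x ∈ ℝ^m` there is a unique `z(x) ∈ ℤ^m`
with `x * z(x) ∈ [0,1)^m`; (ii) the coordinates of `z(x)` are `O((max_i |x_i|)^{k^{m-1}})`. -/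
theorem malcev_fundamental_domain (k m : ℕ) (hk : 1 ≤ k) (hm : 1 ≤ m)
    (P : Fin m → MvPolynomial (Fin m ⊕ Fin m) ℚ)
    (hP0 : ∀ i : Fin m, (i : ℕ) = 0 → P i = 0)
    (hPdeg : ∀ i, (P i).totalDegree ≤ k - 1)
    (hPvars : ∀ i : Fin m, ∀ v ∈ (P i).vars, Sum.elim Fin.val Fin.val v < (i : ℕ)) :
    (∀ x : Fin m → ℝ, ∃! z : Fin m → ℤ,
      ∀ i, malStar P x (fun j => (z j : ℝ)) i ∈ Set.Ico (0 : ℝ) 1) ∧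
    ∃ C : ℝ, 0 < C ∧ ∃ N₀ : ℝ, 0 < N₀ ∧
      ∀ x : Fin m → ℝ, N₀ < ‖x‖ →
        ∀ z : Fin m → ℤ, (∀ i, malStar P x (fun j => (z j : ℝ)) i ∈ Set.Ico (0 : ℝ) 1) →
          ∀ i, |(z i : ℝ)| ≤ C * ‖x‖ ^ (k ^ (m - 1)) := by
  constructor
  · intro x
    exact ⟨zfun P x, zfun_spec P hPvars x, fun z hz => zfun_unique P hPvars x z hz⟩
  · obtain ⟨Cfin, hCfin⟩ := Classical.axiomOfChoice (zbound hk P hP0 hPdeg hPvars)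
    set C : ℝ := ∑ i : Fin m, Cfin i with hC
    have hCfin0 : ∀ i, 0 ≤ Cfin i := fun i => le_trans zero_le_one (hCfin i).1
    have hCi : ∀ i : Fin m, Cfin i ≤ C :=
      fun i => Finset.single_le_sum (fun j _ => hCfin0 j) (Finset.mem_univ i)
    have hC1 : 1 ≤ C := le_trans (hCfin ⟨0, hm⟩).1 (hCi ⟨0, hm⟩)
    refine ⟨C, lt_of_lt_of_le one_pos hC1, 1, one_pos, ?_⟩
    intro x hx z hz i
    have hx1 : 1 ≤ ‖x‖ := le_of_lt hx
    calc |((z i : ℤ) : ℝ)| ≤ Cfin i * ‖x‖ ^ (k ^ (i : ℕ)) := (hCfin i).2 x hx1 z hz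
    _ ≤ C * ‖x‖ ^ (k ^ (m - 1)) := by
        apply mul_le_mul (hCi i) (pow_le_pow_right₀ hx1 (Nat.pow_le_pow_right hk (by omega)))
          (by positivity) (le_trans zero_le_one hC1)
end
end

section
/- Fix integers k ≥ 2 and m ≥ 1 and polynomials P_1, …, P_{m−1}, where P_i ∈ ℚ[s_1,…,s_i,t_1,…,t_i] has total degree at most k−1, defining the operation * and powers x^{*n} on ℝ^m as in the context. For x ∈ ℝ^m and n ∈ ℕ let z_n(x) = (z_{1,n}(x),…,z_{m,n}(x)) ∈ ℤ^m be the unique integer vector with x^{*n} * z_n(x) ∈ [0,1)^m. Then for every M > 0 there exist constants c_2 > 0 and C > 0 (depending on M and on the P_i) such that for all x ∈ [−M, M]^m, all n ∈ ℕ, and all 1 ≤ i ≤ m, one has |z_{i,n}(x)| ≤ C n^{c_2}. -/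
open Filter Topology

noncomputable section

noncomputable def coeffSum {σ : Type*} (Q : MvPolynomial σ ℚ) : ℝ :=
  ∑ d ∈ Q.support, |((Q.coeff d : ℚ) : ℝ)|

lemma coeffSum_nonneg {σ : Type*} (Q : MvPolynomial σ ℚ) : 0 ≤ coeffSum Q :=
  Finset.sum_nonneg fun _ _ => abs_nonneg _

lemma abs_aeval_le {σ : Type*} (Q : MvPolynomial σ ℚ) (v : σ → ℝ) (B : ℝ)
    (hB : 1 ≤ B) (hv : ∀ j ∈ Q.vars, |v j| ≤ B) :
    |MvPolynomial.aeval v Q| ≤ coeffSum Q * B ^ Q.totalDegree := by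
  have hB0 : (0:ℝ) ≤ B := le_trans zero_le_one hB
  rw [MvPolynomial.aeval_def, MvPolynomial.eval₂_eq]
  refine le_trans (Finset.abs_sum_le_sum_abs _ _) ?_
  rw [coeffSum, Finset.sum_mul]
  refine Finset.sum_le_sum fun d hd => ?_
  rw [abs_mul]
  have h1 : |algebraMap ℚ ℝ (Q.coeff d)| = |((Q.coeff d : ℚ) : ℝ)| := by
    rw [eq_ratCast]
  rw [h1]
  refine mul_le_mul_of_nonneg_left ?_ (abs_nonneg _)
  have step1 : |∏ i ∈ d.support, v i ^ d i| = ∏ i ∈ d.support, |v i| ^ d i := by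
    rw [Finset.abs_prod]; simp [abs_pow]
  have step2 : ∏ i ∈ d.support, |v i| ^ d i ≤ ∏ i ∈ d.support, B ^ d i := by
    refine Finset.prod_le_prod (fun i _ => by positivity) fun i hi => ?_
    exact pow_le_pow_left₀ (abs_nonneg _)
      (hv i ((MvPolynomial.mem_vars i).mpr ⟨d, hd, hi⟩)) (d i)
  have step3 : ∏ i ∈ d.support, B ^ d i = B ^ (d.sum fun _ e => e) := by
    rw [Finset.prod_pow_eq_pow_sum]; rfl
  have step4 : B ^ (d.sum fun _ e => e) ≤ B ^ Q.totalDegree :=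
    pow_le_pow_right₀ hB (MvPolynomial.le_totalDegree hd)
  rw [step1]
  exact le_trans step2 (le_trans (le_of_eq step3) step4)

lemma malPow_succ {m : ℕ} (P : Fin m → MvPolynomial (Fin m ⊕ Fin m) ℚ)
    (x : Fin m → ℝ) (n : ℕ) (hn : 1 ≤ n) :
    malPow P x (n + 1) = malStar P x (malPow P x n) := by
  match n, hn with
  | (n + 1), _ => rfl

lemma pow_growth (k m : ℕ) (hk : 2 ≤ k)
    (P : Fin m → MvPolynomial (Fin m ⊕ Fin m) ℚ)
    (hPdeg : ∀ i, (P i).totalDegree ≤ k - 1)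
    (hPvars : ∀ i : Fin m, ∀ v ∈ (P i).vars, Sum.elim Fin.val Fin.val v < (i : ℕ))
    (M : ℝ) (hM : 0 < M) (N : ℕ) :
    ∃ a : ℝ, 1 ≤ a ∧ M ≤ a ∧ ∃ d : ℕ, 1 ≤ d ∧
      ∀ x : Fin m → ℝ, (∀ j, |x j| ≤ M) → ∀ n : ℕ, 1 ≤ n →
        ∀ j : Fin m, (j : ℕ) < N → |malPow P x n j| ≤ a * (n : ℝ) ^ d := by
  have hS : (0:ℝ) ≤ ∑ i, coeffSum (P i) := Finset.sum_nonneg fun i _ => coeffSum_nonneg _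
  set S : ℝ := ∑ i, coeffSum (P i) with hSdef
  have hk1 : 1 ≤ k - 1 := Nat.le_sub_of_add_le hk
  induction N with
  | zero =>
    exact ⟨M + 1, by linarith, by linarith, 1, le_refl 1,
      fun x hx n hn j hj => absurd hj (Nat.not_lt_zero _)⟩
  | succ N ih =>
    obtain ⟨a, ha1, haM, d, hd1, hbound⟩ := ih
    have ha0 : (0:ℝ) < a := lt_of_lt_of_le one_pos ha1
    have hak : (0:ℝ) ≤ a ^ (k - 1) := pow_nonneg (le_of_lt ha0) _
    have hdd' : d ≤ d * (k - 1) + 1 :=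
      le_trans (Nat.le_mul_of_pos_right d hk1) (Nat.le_succ _)
    refine ⟨a + M + S * a ^ (k - 1), by nlinarith, by nlinarith,
      d * (k - 1) + 1, Nat.le_add_left 1 _, ?_⟩
    intro x hx n hn j hj
    have hn1 : (1:ℝ) ≤ (n:ℝ) := by exact_mod_cast hn
    have hn0 : (0:ℝ) ≤ (n:ℝ) := by linarith
    rcases Nat.lt_or_ge (j : ℕ) N with hjN | hjN
    · -- old coordinate
      refine le_trans (hbound x hx n hn j hjN) ?_
      have h1 : (n:ℝ) ^ d ≤ (n:ℝ) ^ (d * (k - 1) + 1) := pow_le_pow_right₀ hn1 hdd'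
      have h2 : (0:ℝ) ≤ (n:ℝ) ^ d := pow_nonneg hn0 d
      have h3 : a * (n:ℝ) ^ d ≤ a * (n:ℝ) ^ (d * (k - 1) + 1) :=
        mul_le_mul_of_nonneg_left h1 (le_of_lt ha0)
      have h4 : (0:ℝ) ≤ (n:ℝ) ^ (d * (k - 1) + 1) := pow_nonneg hn0 _
      nlinarith [mul_nonneg (mul_nonneg hS hak) h4, mul_nonneg (le_of_lt hM) h4]
    · -- new coordinate, j.val = N
      have hjval : (j : ℕ) = N := le_antisymm (Nat.lt_succ_iff.mp hj) hjN
      set a' : ℝ := a + M + S * a ^ (k - 1) with ha'def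
      set D : ℕ := d * (k - 1) with hDdef
      have ha'M : M ≤ a' := by nlinarith
      have ha'0 : (0:ℝ) < a' := lt_of_lt_of_le hM ha'M
      clear hn1 hn0
      induction n, hn using Nat.le_induction with
      | base =>
        have h1 : malPow P x 1 j = x j := rfl
        rw [h1]
        have h2 : ((1:ℕ):ℝ) ^ (D + 1) = 1 := by norm_num
        rw [h2, mul_one]
        exact le_trans (hx j) ha'M
      | succ n hn ihn =>
        have hn1 : (1:ℝ) ≤ (n:ℝ) := by exact_mod_cast hn
        have hn0 : (0:ℝ) ≤ (n:ℝ) := by linarith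
        rw [malPow_succ P x n hn]
        set y := malPow P x n with hydef
        set B : ℝ := a * (n:ℝ) ^ d with hBdef
        have hnd1 : (1:ℝ) ≤ (n:ℝ) ^ d := one_le_pow₀ hn1
        have hB1 : (1:ℝ) ≤ B := by nlinarith
        have hv : ∀ v ∈ (P j).vars, |Sum.elim x y v| ≤ B := by
          intro v hvv
          have hlt := hPvars j v hvv
          rw [hjval] at hlt
          cases v with
          | inl t =>
            simp only [Sum.elim_inl]
            calc |x t| ≤ M := hx t
              _ ≤ a := haM
              _ ≤ B := by nlinarith
          | inr t =>
            simp only [Sum.elim_inr]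
            exact hbound x hx n hn t hlt
        have haev : |MvPolynomial.aeval (Sum.elim x y) (P j)| ≤ S * (a ^ (k-1) * (n:ℝ) ^ D) := by
          have h1 := abs_aeval_le (P j) (Sum.elim x y) B hB1 hv
          have h2 : B ^ (P j).totalDegree ≤ B ^ (k - 1) :=
            pow_le_pow_right₀ hB1 (hPdeg j)
          have h3 : coeffSum (P j) ≤ S :=
            Finset.single_le_sum (fun i _ => coeffSum_nonneg (P i)) (Finset.mem_univ j)
          have h4 : B ^ (k - 1) = a ^ (k-1) * (n:ℝ) ^ D := by
            rw [hBdef, mul_pow, ← pow_mul]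
          calc |MvPolynomial.aeval (Sum.elim x y) (P j)|
              ≤ coeffSum (P j) * B ^ (P j).totalDegree := h1
            _ ≤ S * B ^ (k - 1) := by
                refine mul_le_mul h3 h2 (pow_nonneg (by linarith) _) hS
            _ = S * (a ^ (k-1) * (n:ℝ) ^ D) := by rw [h4]
        have hmal : malStar P x y j = x j + y j + MvPolynomial.aeval (Sum.elim x y) (P j) := rfl
        rw [hmal]
        have htri : |x j + y j + MvPolynomial.aeval (Sum.elim x y) (P j)|
            ≤ M + a' * (n:ℝ) ^ (D + 1) + S * (a ^ (k-1) * (n:ℝ) ^ D) := by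
          calc |x j + y j + MvPolynomial.aeval (Sum.elim x y) (P j)|
              ≤ |x j| + |y j| + |MvPolynomial.aeval (Sum.elim x y) (P j)| :=
                le_trans (abs_add_le _ _) (by gcongr; exact abs_add_le _ _)
            _ ≤ M + a' * (n:ℝ) ^ (D + 1) + S * (a ^ (k-1) * (n:ℝ) ^ D) :=
                add_le_add (add_le_add (hx j) ihn) haev
        refine le_trans htri ?_
        push_cast
        have hpD : (1:ℝ) ≤ (n:ℝ) ^ D := one_le_pow₀ hn1
        have hineq : (n:ℝ) ^ (D + 1) + (n:ℝ) ^ D ≤ ((n:ℝ) + 1) ^ (D + 1) := by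
          have e2 : (n:ℝ) ^ D ≤ ((n:ℝ) + 1) ^ D := pow_le_pow_left₀ hn0 (by linarith) D
          calc (n:ℝ) ^ (D + 1) + (n:ℝ) ^ D = ((n:ℝ) + 1) * (n:ℝ) ^ D := by
                rw [pow_succ]; ring
            _ ≤ ((n:ℝ) + 1) * ((n:ℝ) + 1) ^ D := by
                refine mul_le_mul_of_nonneg_left e2 (by linarith)
            _ = ((n:ℝ) + 1) ^ (D + 1) := by rw [pow_succ]; ring
        have hmono := mul_le_mul_of_nonneg_left hineq (le_of_lt ha'0)
        rw [mul_add] at hmono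
        have hexp : a' * (n:ℝ) ^ D = a * (n:ℝ) ^ D + M * (n:ℝ) ^ D + S * a ^ (k-1) * (n:ℝ) ^ D := by
          rw [ha'def]; ring
        have hMnD : M ≤ M * (n:ℝ) ^ D := by nlinarith
        have hanD : (0:ℝ) ≤ a * (n:ℝ) ^ D := by positivity
        have hSnD : S * (a ^ (k-1) * (n:ℝ) ^ D) = S * a ^ (k-1) * (n:ℝ) ^ D := by ring
        linarith [hmono, hexp, hMnD, hanD, hSnD.ge, hSnD.le]

set_option maxHeartbeats 1000000 in
lemma z_growth (k m : ℕ) (hk : 2 ≤ k)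
    (P : Fin m → MvPolynomial (Fin m ⊕ Fin m) ℚ)
    (hPdeg : ∀ i, (P i).totalDegree ≤ k - 1)
    (hPvars : ∀ i : Fin m, ∀ v ∈ (P i).vars, Sum.elim Fin.val Fin.val v < (i : ℕ))
    (M : ℝ) (hM : 0 < M) (a : ℝ) (ha1 : 1 ≤ a) (haM : M ≤ a) (d : ℕ) (hd1 : 1 ≤ d)
    (hbound : ∀ x : Fin m → ℝ, (∀ j, |x j| ≤ M) → ∀ n : ℕ, 1 ≤ n →
        ∀ j : Fin m, |malPow P x n j| ≤ a * (n : ℝ) ^ d) (N : ℕ) :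
    ∃ b : ℝ, 1 ≤ b ∧ ∃ e : ℕ, 1 ≤ e ∧
      ∀ x : Fin m → ℝ, (∀ j, |x j| ≤ M) → ∀ n : ℕ, 1 ≤ n →
        ∀ z : Fin m → ℤ,
          (∀ i, malStar P (malPow P x n) (fun j => (z j : ℝ)) i ∈ Set.Ico (0 : ℝ) 1) →
          ∀ i : Fin m, (i : ℕ) < N → |(z i : ℝ)| ≤ b * (n : ℝ) ^ e := by
  have hS : (0:ℝ) ≤ ∑ i, coeffSum (P i) := Finset.sum_nonneg fun i _ => coeffSum_nonneg _
  set S : ℝ := ∑ i, coeffSum (P i) with hSdef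
  have hk1 : 1 ≤ k - 1 := Nat.le_sub_of_add_le hk
  have ha0 : (0:ℝ) < a := lt_of_lt_of_le one_pos ha1
  induction N with
  | zero =>
    exact ⟨1, le_refl 1, 1, le_refl 1, fun x hx n hn z hz i hi => absurd hi (Nat.not_lt_zero _)⟩
  | succ N ih =>
    obtain ⟨b, hb1, e, he1, hzbound⟩ := ih
    have hb0 : (0:ℝ) < b := lt_of_lt_of_le one_pos hb1
    have hab1 : (1:ℝ) ≤ a * b := by nlinarith
    have habk : (0:ℝ) ≤ (a * b) ^ (k - 1) := pow_nonneg (by nlinarith) _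
    set b' : ℝ := 1 + a + b + S * (a * b) ^ (k - 1) with hb'def
    set e' : ℕ := (d + e) * (k - 1) with he'def
    have hee' : e ≤ e' := by
      calc e ≤ d + e := Nat.le_add_left e d
        _ = (d + e) * 1 := (mul_one _).symm
        _ ≤ (d + e) * (k - 1) := Nat.mul_le_mul_left _ hk1
    have hde' : d ≤ e' := by
      calc d ≤ d + e := Nat.le_add_right d e
        _ = (d + e) * 1 := (mul_one _).symm
        _ ≤ (d + e) * (k - 1) := Nat.mul_le_mul_left _ hk1
    have he'1 : 1 ≤ e' := le_trans he1 hee'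
    have hbb' : b ≤ b' := by nlinarith
    have hb'1 : 1 ≤ b' := le_trans hb1 hbb'
    refine ⟨b', hb'1, e', he'1, ?_⟩
    intro x hx n hn z hz i hi
    have hn1 : (1:ℝ) ≤ (n:ℝ) := by exact_mod_cast hn
    have hn0 : (0:ℝ) ≤ (n:ℝ) := by linarith
    have hne' : (1:ℝ) ≤ (n:ℝ) ^ e' := one_le_pow₀ hn1
    rcases Nat.lt_or_ge (i : ℕ) N with hiN | hiN
    · -- old coordinate
      refine le_trans (hzbound x hx n hn z hz i hiN) ?_
      have h1 : (n:ℝ) ^ e ≤ (n:ℝ) ^ e' := pow_le_pow_right₀ hn1 hee'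
      have h2 : (0:ℝ) ≤ (n:ℝ) ^ e' := by positivity
      nlinarith [mul_le_mul_of_nonneg_left h1 (le_of_lt hb0)]
    · -- new coordinate
      have hival : (i : ℕ) = N := le_antisymm (Nat.lt_succ_iff.mp hi) hiN
      set y := malPow P x n with hydef
      set zr : Fin m → ℝ := fun j => (z j : ℝ) with hzrdef
      set B : ℝ := (a * b) * (n:ℝ) ^ (d + e) with hBdef
      have hnde : (1:ℝ) ≤ (n:ℝ) ^ (d + e) := one_le_pow₀ hn1
      have hB1 : (1:ℝ) ≤ B := by nlinarith
      have hv : ∀ v ∈ (P i).vars, |Sum.elim y zr v| ≤ B := by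
        intro v hvv
        have hlt := hPvars i v hvv
        rw [hival] at hlt
        cases v with
        | inl t =>
          simp only [Sum.elim_inl]
          have h2 : (n:ℝ) ^ d ≤ (n:ℝ) ^ (d + e) := pow_le_pow_right₀ hn1 (Nat.le_add_right d e)
          have h4 : (0:ℝ) ≤ (n:ℝ) ^ (d + e) := by positivity
          calc |y t| ≤ a * (n:ℝ) ^ d := hbound x hx n hn t
            _ ≤ a * (n:ℝ) ^ (d + e) := mul_le_mul_of_nonneg_left h2 (le_of_lt ha0)
            _ ≤ (a * b) * (n:ℝ) ^ (d + e) := by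
                refine mul_le_mul_of_nonneg_right ?_ h4
                nlinarith
        | inr t =>
          simp only [Sum.elim_inr]
          have h2 : (n:ℝ) ^ e ≤ (n:ℝ) ^ (d + e) := pow_le_pow_right₀ hn1 (Nat.le_add_left e d)
          have h4 : (0:ℝ) ≤ (n:ℝ) ^ (d + e) := by positivity
          calc |zr t| ≤ b * (n:ℝ) ^ e := hzbound x hx n hn z hz t hlt
            _ ≤ b * (n:ℝ) ^ (d + e) := mul_le_mul_of_nonneg_left h2 (le_of_lt hb0)
            _ ≤ (a * b) * (n:ℝ) ^ (d + e) := by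
                refine mul_le_mul_of_nonneg_right ?_ h4
                nlinarith
      have haev : |MvPolynomial.aeval (Sum.elim y zr) (P i)| ≤ S * ((a*b) ^ (k-1) * (n:ℝ) ^ e') := by
        have h1 := abs_aeval_le (P i) (Sum.elim y zr) B hB1 hv
        have h2 : B ^ (P i).totalDegree ≤ B ^ (k - 1) := pow_le_pow_right₀ hB1 (hPdeg i)
        have h3 : coeffSum (P i) ≤ S :=
          Finset.single_le_sum (fun t _ => coeffSum_nonneg (P t)) (Finset.mem_univ i)
        have h4 : B ^ (k - 1) = (a*b) ^ (k-1) * (n:ℝ) ^ e' := by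
          rw [hBdef, mul_pow, ← pow_mul, he'def]
        calc |MvPolynomial.aeval (Sum.elim y zr) (P i)|
            ≤ coeffSum (P i) * B ^ (P i).totalDegree := h1
          _ ≤ S * B ^ (k - 1) := mul_le_mul h3 h2 (pow_nonneg (by linarith) _) hS
          _ = S * ((a*b) ^ (k-1) * (n:ℝ) ^ e') := by rw [h4]
      have hmem := hz i
      have hstar : malStar P y zr i = y i + zr i + MvPolynomial.aeval (Sum.elim y zr) (P i) := rfl
      obtain ⟨hlo, hhi⟩ := hmem
      have habs : |malStar P y zr i| ≤ 1 := by
        rw [abs_le]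
        constructor <;> [linarith; linarith]
      have hzi : zr i = malStar P y zr i - y i - MvPolynomial.aeval (Sum.elim y zr) (P i) := by
        rw [hstar]; ring
      have hyb : |y i| ≤ a * (n:ℝ) ^ d := hbound x hx n hn i
      have htri : |zr i| ≤ 1 + a * (n:ℝ) ^ d + S * ((a*b) ^ (k-1) * (n:ℝ) ^ e') := by
        rw [hzi]
        calc |malStar P y zr i - y i - MvPolynomial.aeval (Sum.elim y zr) (P i)|
            ≤ |malStar P y zr i| + |y i| + |MvPolynomial.aeval (Sum.elim y zr) (P i)| := by
              refine le_trans (abs_sub _ _) ?_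
              exact add_le_add (abs_sub _ _) (le_refl _)
          _ ≤ 1 + a * (n:ℝ) ^ d + S * ((a*b) ^ (k-1) * (n:ℝ) ^ e') :=
              add_le_add (add_le_add habs hyb) haev
      refine le_trans htri ?_
      have h5 : (n:ℝ) ^ d ≤ (n:ℝ) ^ e' := pow_le_pow_right₀ hn1 hde'
      have h6 : a * (n:ℝ) ^ d ≤ a * (n:ℝ) ^ e' := mul_le_mul_of_nonneg_left h5 (le_of_lt ha0)
      have hexp : b' * (n:ℝ) ^ e' =
          (n:ℝ) ^ e' + a * (n:ℝ) ^ e' + b * (n:ℝ) ^ e' + S * (a*b) ^ (k-1) * (n:ℝ) ^ e' := by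
        rw [hb'def]; ring
      have hbn : (0:ℝ) ≤ b * (n:ℝ) ^ e' := by positivity
      have hSr : S * ((a*b) ^ (k-1) * (n:ℝ) ^ e') = S * (a*b) ^ (k-1) * (n:ℝ) ^ e' := by ring
      linarith [hne', h6, hexp, hbn, hSr.le, hSr.ge]

/-- Corollary 4.6 of the paper: for `x ∈ [-M, M]^m`, the integer vector `z_n(x)` with
`x^{*n} * z_n(x) ∈ [0,1)^m` has coordinates bounded by `C n^{c₂}`. -/
theorem malcev_power_fundamental_domain_bound (k m : ℕ) (hk : 2 ≤ k) (hm : 1 ≤ m)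
    (P : Fin m → MvPolynomial (Fin m ⊕ Fin m) ℚ)
    (hP0 : ∀ i : Fin m, (i : ℕ) = 0 → P i = 0)
    (hPdeg : ∀ i, (P i).totalDegree ≤ k - 1)
    (hPvars : ∀ i : Fin m, ∀ v ∈ (P i).vars, Sum.elim Fin.val Fin.val v < (i : ℕ))
    (M : ℝ) (hM : 0 < M) :
    ∃ c₂ : ℝ, 0 < c₂ ∧ ∃ C : ℝ, 0 < C ∧
      ∀ x : Fin m → ℝ, (∀ i, x i ∈ Set.Icc (-M) M) →
        ∀ n : ℕ, 1 ≤ n →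
          ∀ z : Fin m → ℤ,
            (∀ i, malStar P (malPow P x n) (fun j => (z j : ℝ)) i ∈ Set.Ico (0 : ℝ) 1) →
            ∀ i, |(z i : ℝ)| ≤ C * (n : ℝ) ^ c₂ := by
  obtain ⟨a, ha1, haM, d, hd1, hbound⟩ :=
    pow_growth k m hk P hPdeg hPvars M hM m
  have hbound' : ∀ x : Fin m → ℝ, (∀ j, |x j| ≤ M) → ∀ n : ℕ, 1 ≤ n →
      ∀ j : Fin m, |malPow P x n j| ≤ a * (n : ℝ) ^ d :=
    fun x hx n hn j => hbound x hx n hn j j.isLt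
  obtain ⟨b, hb1, e, he1, hzbound⟩ :=
    z_growth k m hk P hPdeg hPvars M hM a ha1 haM d hd1 hbound' m
  refine ⟨(e : ℝ), by exact_mod_cast Nat.lt_of_lt_of_le Nat.zero_lt_one he1, b,
    lt_of_lt_of_le one_pos hb1, ?_⟩
  intro x hx n hn z hz i
  have hx' : ∀ j, |x j| ≤ M := fun j => abs_le.mpr ⟨(hx j).1, (hx j).2⟩
  have h := hzbound x hx' n hn z hz i i.isLt
  rwa [show (n : ℝ) ^ (e : ℝ) = (n : ℝ) ^ e from Real.rpow_natCast _ e]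
end
end

section
/- Let E ⊆ ℕ be a sublacunary set. Then for every d ∈ ℕ and every ε > 0 there exist two finite disjoint subsets A, B ⊆ E such that no α ∈ 𝕋^d = (ℝ/ℤ)^d ε-separates A and B; that is, for every α ∈ 𝕋^d there exist a ∈ A and b ∈ B with ‖aα − bα‖_{𝕋^d} < ε. (This is the 1-step, torus, case of the paper's key non-separability proposition for sublacunary sets.) -/
open Filter Topology

noncomputable section

namespace SublacunaryAux

local instance : Fact ((0:ℝ) < 1) := ⟨one_pos⟩

/-- The canonical representative of a point of the circle in `[0,1)`. -/
def fr (x : AddCircle (1:ℝ)) : ℝ := (AddCircle.equivIco 1 0 x : ℝ)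

lemma fr_nonneg (x : AddCircle (1:ℝ)) : 0 ≤ fr x := by
  have := (AddCircle.equivIco 1 0 x).2.1; simpa [fr] using this

lemma fr_lt_one (x : AddCircle (1:ℝ)) : fr x < 1 := by
  have := (AddCircle.equivIco 1 0 x).2.2; simpa [fr] using this

lemma coe_fr (x : AddCircle (1:ℝ)) : ((fr x : ℝ) : AddCircle (1:ℝ)) = x :=
  (AddCircle.equivIco 1 0).symm_apply_apply x

lemma norm_coe_le (a : ℝ) : ‖(a : AddCircle (1:ℝ))‖ ≤ |a| := by
  rw [AddCircle.norm_eq]; simpa using round_le a 0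

lemma dist_coe_le (a b : ℝ) : dist (a : AddCircle (1:ℝ)) (b : AddCircle (1:ℝ)) ≤ |a - b| := by
  rw [dist_eq_norm, ← QuotientAddGroup.mk_sub]; exact norm_coe_le _

lemma dist_fr_le (x y : AddCircle (1:ℝ)) : dist x y ≤ |fr x - fr y| := by
  have h := dist_coe_le (fr x) (fr y)
  rwa [coe_fr, coe_fr] at h

lemma dist_nsmul_le (a : ℕ) (x y : AddCircle (1:ℝ)) :
    dist (a • x) (a • y) ≤ a * dist x y := by
  rw [dist_eq_norm, ← smul_sub, dist_eq_norm]
  exact norm_nsmul_le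

/-- The box index of `x` in the subdivision of the circle into `m` arcs. -/
def box (m : ℕ) (hm : 0 < m) (x : AddCircle (1:ℝ)) : Fin m :=
  ⟨⌊fr x * m⌋₊, by
    have h1 : fr x * m < m := by
      calc fr x * (m:ℝ) < 1 * m :=
            mul_lt_mul_of_pos_right (fr_lt_one x) (by exact_mod_cast hm)
        _ = m := one_mul _
    have : ⌊fr x * (m:ℝ)⌋₊ < m := by
      rw [Nat.floor_lt (mul_nonneg (fr_nonneg x) (by positivity))]
      exact_mod_cast h1
    exact this⟩

lemma abs_sub_lt_of_box_eq {m : ℕ} (hm : 0 < m) {x y : AddCircle (1:ℝ)}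
    (h : box m hm x = box m hm y) : |fr x - fr y| < 1 / m := by
  have hmR : (0:ℝ) < m := by exact_mod_cast hm
  have hk : ⌊fr x * (m:ℝ)⌋₊ = ⌊fr y * (m:ℝ)⌋₊ := congrArg Fin.val h
  have h1 : fr x * m < ⌊fr y * (m:ℝ)⌋₊ + 1 := by rw [← hk]; exact Nat.lt_floor_add_one _
  have h2 : fr y * m < ⌊fr x * (m:ℝ)⌋₊ + 1 := by rw [hk]; exact Nat.lt_floor_add_one _
  have h3 : (⌊fr x * (m:ℝ)⌋₊ : ℝ) ≤ fr x * m := Nat.floor_le (mul_nonneg (fr_nonneg x) hmR.le)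
  have h4 : (⌊fr y * (m:ℝ)⌋₊ : ℝ) ≤ fr y * m := Nat.floor_le (mul_nonneg (fr_nonneg y) hmR.le)
  have h5 : fr x - fr y < 1 / m := by rw [lt_div_iff₀ hmR, sub_mul]; linarith
  have h6 : fr y - fr x < 1 / m := by rw [lt_div_iff₀ hmR, sub_mul]; linarith
  rw [abs_lt]; constructor <;> linarith

lemma dist_lt_of_box_eq {m : ℕ} (hm : 0 < m) {x y : AddCircle (1:ℝ)}
    (h : box m hm x = box m hm y) : dist x y < 1 / m :=
  lt_of_le_of_lt (dist_fr_le x y) (abs_sub_lt_of_box_eq hm h)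

/-- A grid point on the circle. -/
def gridpt (q : ℕ) (k : Fin q) : AddCircle (1:ℝ) := ((k : ℝ) / q : ℝ)

lemma dist_gridpt {q : ℕ} (hq : 0 < q) (x : AddCircle (1:ℝ)) :
    dist x (gridpt q (box q hq x)) < 1 / q := by
  have hqR : (0:ℝ) < q := by exact_mod_cast hq
  have h3 : (⌊fr x * (q:ℝ)⌋₊ : ℝ) ≤ fr x * q := Nat.floor_le (mul_nonneg (fr_nonneg x) hqR.le)
  have h1 : fr x * q < ⌊fr x * (q:ℝ)⌋₊ + 1 := Nat.lt_floor_add_one _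
  have hle : dist x (gridpt q (box q hq x)) ≤ |fr x - (⌊fr x * (q:ℝ)⌋₊ : ℝ) / q| := by
    have h := dist_coe_le (fr x) ((⌊fr x * (q:ℝ)⌋₊ : ℝ) / q)
    rwa [coe_fr] at h
  refine lt_of_le_of_lt hle ?_
  rw [abs_lt]
  constructor
  · have : (⌊fr x * (q:ℝ)⌋₊ : ℝ) / q ≤ fr x := by rw [div_le_iff₀ hqR]; linarith
    have hq1 : (0:ℝ) < 1 / q := by positivity
    linarith
  · rw [sub_lt_iff_lt_add, ← add_div, lt_div_iff₀ hqR]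
    linarith

/-- Sublacunarity lets us choose `n` so that `2^n` beats the number of possible codes. -/
lemma exists_good_n (r : ℕ → ℕ) (hr : IsSublacunarySeq r) (d : ℕ) (ε : ℝ) (hε : 0 < ε)
    (M : ℕ) :
    ∃ n : ℕ, 1 ≤ n ∧
      (⌈(4:ℝ) * (r (n-1) : ℝ) / ε⌉₊ : ℕ)^d * 2^M < 2^n := by
  have hL : (0:ℝ) < Real.log 2 := Real.log_pos one_lt_two
  set δ : ℝ := Real.log 2 / (2 * ((d:ℝ) + 1)) with hδdef
  have hδ : 0 < δ := by positivity
  obtain ⟨N, hN⟩ := eventually_atTop.mp (hr.2.2.eventually (gt_mem_nhds hδ))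
  set C₁ : ℝ := ((4:ℝ)/ε + 1)^d * 2^M with hC₁def
  have hC₁ : 0 < C₁ := by positivity
  have htend : Tendsto (fun k : ℕ => Real.exp ((k:ℝ) * (Real.log 2 / 2))) atTop atTop :=
    Real.tendsto_exp_atTop.comp ((tendsto_natCast_atTop_atTop).atTop_mul_const (by positivity))
  obtain ⟨n₀, hn₀⟩ := eventually_atTop.mp (htend.eventually_gt_atTop C₁)
  refine ⟨max (max N 1 + 1) n₀, le_trans (by omega) (le_max_left _ _), ?_⟩
  set n := max (max N 1 + 1) n₀ with hndef
  set k := n - 1 with hkdef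
  have hk1 : 1 ≤ k := by omega
  have hkN : N ≤ k := by omega
  have hkn : k ≤ n := by omega
  have hkR : (0:ℝ) < k := by exact_mod_cast hk1
  have hrk : (r k : ℝ) ≤ Real.exp (δ * n) := by
    have h1 : Real.log (r k) / k < δ := hN k hkN
    have h2 : Real.log (r k) < δ * k := by
      rw [div_lt_iff₀ hkR] at h1; linarith [h1]
    have h3 : δ * (k:ℝ) ≤ δ * n := by
      have : (k:ℝ) ≤ n := by exact_mod_cast hkn
      nlinarith
    have hrk0 : (0:ℝ) < (r k : ℝ) := by exact_mod_cast hr.1 k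
    calc (r k : ℝ) = Real.exp (Real.log (r k)) := (Real.exp_log hrk0).symm
      _ ≤ Real.exp (δ * n) := Real.exp_le_exp.mpr (by linarith)
  have hQle : (⌈(4:ℝ) * (r k : ℝ) / ε⌉₊ : ℝ) ≤ ((4:ℝ)/ε + 1) * Real.exp (δ * n) := by
    have h0 : (0:ℝ) ≤ 4 * (r k : ℝ) / ε := by positivity
    have h1 : (⌈(4:ℝ) * (r k : ℝ) / ε⌉₊ : ℝ) < 4 * (r k : ℝ) / ε + 1 :=
      Nat.ceil_lt_add_one h0
    have h2 : (4:ℝ) * (r k : ℝ) / ε ≤ (4/ε) * Real.exp (δ * n) := by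
      have h := mul_le_mul_of_nonneg_left hrk (show (0:ℝ) ≤ 4/ε by positivity)
      calc (4:ℝ) * (r k : ℝ) / ε = 4/ε * (r k : ℝ) := by ring
        _ ≤ 4/ε * Real.exp (δ * n) := h
    have h3 : (1:ℝ) ≤ Real.exp (δ * n) := Real.one_le_exp (by positivity)
    linarith
  have hmain : ((⌈(4:ℝ) * (r k : ℝ) / ε⌉₊ : ℕ) : ℝ)^d * 2^M < 2^n := by
    have hexp : Real.exp (δ * n) ^ d = Real.exp ((d:ℝ) * (δ * n)) := by
      rw [Real.exp_nat_mul]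
    have hdd : (d:ℝ) * (δ * n) ≤ (n:ℝ) * (Real.log 2 / 2) := by
      have hdδ : (d:ℝ) * δ ≤ Real.log 2 / 2 := by
        rw [hδdef, mul_div_assoc', div_le_div_iff₀ (by positivity) two_pos]
        nlinarith [Nat.cast_nonneg (α := ℝ) d]
      nlinarith [Nat.cast_nonneg (α := ℝ) n]
    have hnC : C₁ < Real.exp ((n:ℝ) * (Real.log 2 / 2)) := hn₀ n (le_max_right _ _)
    have hkey : ((⌈(4:ℝ) * (r k : ℝ) / ε⌉₊ : ℕ) : ℝ)^d
        ≤ ((4:ℝ)/ε + 1)^d * Real.exp ((n:ℝ) * (Real.log 2 / 2)) := by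
      calc ((⌈(4:ℝ) * (r k : ℝ) / ε⌉₊ : ℕ) : ℝ)^d
          ≤ (((4:ℝ)/ε + 1) * Real.exp (δ * n))^d :=
            pow_le_pow_left₀ (by positivity) hQle d
        _ = ((4:ℝ)/ε + 1)^d * Real.exp (δ * n) ^ d := mul_pow _ _ _
        _ ≤ ((4:ℝ)/ε + 1)^d * Real.exp ((n:ℝ) * (Real.log 2 / 2)) := by
            rw [hexp]
            exact mul_le_mul_of_nonneg_left (Real.exp_le_exp.mpr hdd) (by positivity)
    have h2n : Real.exp ((n:ℝ) * (Real.log 2/2)) * Real.exp ((n:ℝ) * (Real.log 2/2))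
        = (2:ℝ)^n := by
      rw [← Real.exp_add]
      have he : (n:ℝ) * (Real.log 2/2) + (n:ℝ) * (Real.log 2/2) = (n:ℝ) * Real.log 2 := by ring
      rw [he, Real.exp_nat_mul, Real.exp_log two_pos]
    have hexpPos : (0:ℝ) < Real.exp ((n:ℝ) * (Real.log 2/2)) := Real.exp_pos _
    calc ((⌈(4:ℝ) * (r k : ℝ) / ε⌉₊ : ℕ) : ℝ)^d * 2^M
        ≤ (((4:ℝ)/ε + 1)^d * Real.exp ((n:ℝ) * (Real.log 2 / 2))) * 2^M :=
          mul_le_mul_of_nonneg_right hkey (by positivity)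
      _ = C₁ * Real.exp ((n:ℝ) * (Real.log 2 / 2)) := by rw [hC₁def]; ring
      _ < Real.exp ((n:ℝ) * (Real.log 2/2)) * Real.exp ((n:ℝ) * (Real.log 2/2)) :=
          mul_lt_mul_of_pos_right hnC hexpPos
      _ = 2^n := h2n
  exact_mod_cast hmain

end SublacunaryAux

/-- For a sublacunary set `E`, every `d ∈ ℕ` and `ε > 0`, there are two finite
disjoint subsets `A, B ⊆ E` that are not `ε`-separated by any `α ∈ 𝕋^d`. -/
theorem sublacunary_not_eps_separable (r : ℕ → ℕ) (hr : IsSublacunarySeq r)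
    (d : ℕ) (ε : ℝ) (hε : 0 < ε) :
    ∃ A B : Finset ℕ, ↑A ⊆ Set.range r ∧ ↑B ⊆ Set.range r ∧ Disjoint A B ∧
      ∀ α : Fin d → AddCircle (1 : ℝ), ∃ a ∈ A, ∃ b ∈ B, dist (a • α) (b • α) < ε := by
  classical
  haveI : Fact ((0:ℝ) < 1) := ⟨one_pos⟩
  open SublacunaryAux in
  by_contra hcon
  push_neg at hcon
  set M : ℕ := ⌈(4:ℝ)/ε⌉₊ with hMdef
  have hM0 : 0 < M := Nat.ceil_pos.mpr (by positivity)
  have hMε : (1:ℝ)/M ≤ ε/4 := by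
    have h1 : (4:ℝ)/ε ≤ M := Nat.le_ceil _
    have hMR : (0:ℝ) < M := by exact_mod_cast hM0
    rw [div_le_div_iff₀ hMR (by norm_num : (0:ℝ) < 4)]
    rw [div_le_iff₀ hε] at h1
    linarith
  obtain ⟨n, hn1, hcard⟩ := SublacunaryAux.exists_good_n r hr d ε hε (M^d)
  set Q : ℕ := ⌈(4:ℝ) * (r (n-1) : ℝ) / ε⌉₊ with hQdef
  have hQ0 : 0 < Q := Nat.ceil_pos.mpr (by
    have : (0:ℝ) < (r (n-1) : ℝ) := by exact_mod_cast hr.1 (n-1)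
    positivity)
  have hQR : (0:ℝ) < Q := by exact_mod_cast hQ0
  have hrQ : ∀ s ∈ Finset.range n, (r s : ℝ) / Q ≤ ε/4 := by
    intro s hs
    have hsn : s ≤ n - 1 := by
      have := Finset.mem_range.mp hs; omega
    have hmono : (r s : ℝ) ≤ (r (n-1) : ℝ) := by
      exact_mod_cast hr.2.1.monotone hsn
    have hceil : (4:ℝ) * (r (n-1) : ℝ) / ε ≤ Q := Nat.le_ceil _
    rw [div_le_iff₀ hε] at hceil
    rw [div_le_div_iff₀ hQR (by norm_num : (0:ℝ) < 4)]
    linarith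
  have hsep : ∀ T : Finset ℕ, ∃ α : Fin d → AddCircle (1:ℝ), T ⊆ Finset.range n →
      ∀ a ∈ T.image r, ∀ b ∈ (Finset.range n \ T).image r,
        ε ≤ dist (a • α) (b • α) := by
    intro T
    by_cases hT : T ⊆ Finset.range n
    · obtain ⟨α, hα⟩ := hcon (T.image r) ((Finset.range n \ T).image r)
        (by rw [Finset.coe_image]; exact Set.image_subset_range _ _)
        (by rw [Finset.coe_image]; exact Set.image_subset_range _ _)
        ((Finset.disjoint_image hr.2.1.injective).mpr Finset.disjoint_sdiff)
      exact ⟨α, fun _ => hα⟩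
    · exact ⟨0, fun h => absurd h hT⟩
  choose α hα using hsep
  set gp : Finset ℕ → (Fin d → AddCircle (1:ℝ)) :=
    fun T i => SublacunaryAux.gridpt Q (SublacunaryAux.box Q hQ0 (α T i)) with hgpdef
  have est1 : ∀ (T : Finset ℕ), ∀ s ∈ Finset.range n,
      dist ((r s : ℕ) • α T) ((r s : ℕ) • gp T) ≤ ε/4 := by
    intro T s hs
    rw [dist_pi_le_iff (by positivity)]
    intro i
    have h1 : dist ((r s : ℕ) • α T i) ((r s : ℕ) • gp T i)
        ≤ (r s : ℝ) * dist (α T i) (gp T i) :=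
      SublacunaryAux.dist_nsmul_le _ _ _
    have h2 : dist (α T i) (gp T i) ≤ 1/Q := (SublacunaryAux.dist_gridpt hQ0 (α T i)).le
    have h3 : (r s : ℝ) * dist (α T i) (gp T i) ≤ (r s : ℝ) * (1/Q) :=
      mul_le_mul_of_nonneg_left h2 (by positivity)
    have h4 : (r s : ℝ) * (1/Q) = (r s : ℝ)/Q := by ring
    have h5 := hrQ s hs
    calc dist (((r s : ℕ) • α T) i) (((r s : ℕ) • gp T) i)
        = dist ((r s : ℕ) • α T i) ((r s : ℕ) • gp T i) := rfl
      _ ≤ (r s : ℝ) * dist (α T i) (gp T i) := h1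
      _ ≤ (r s : ℝ) * (1/Q) := h3
      _ ≤ ε/4 := by rw [h4]; exact h5
  have est2 : ∀ (g : Fin d → AddCircle (1:ℝ)) (a b : ℕ),
      (∀ i, SublacunaryAux.box M hM0 (a • g i) = SublacunaryAux.box M hM0 (b • g i)) →
      dist (a • g) (b • g) ≤ ε/4 := by
    intro g a b hbox
    rw [dist_pi_le_iff (by positivity)]
    intro i
    calc dist ((a • g) i) ((b • g) i) = dist (a • g i) (b • g i) := rfl
      _ ≤ 1/M := (SublacunaryAux.dist_lt_of_box_eq hM0 (hbox i)).le
      _ ≤ ε/4 := hMε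
  set code : Finset ℕ → (Fin d → Fin Q) × Finset (Fin d → Fin M) :=
    fun T => (fun i => SublacunaryAux.box Q hQ0 (α T i),
      T.image (fun s => fun i : Fin d =>
        SublacunaryAux.box M hM0 ((r s : ℕ) • gp T i))) with hcodedef
  have key : ∀ T T' : Finset ℕ, T ⊆ Finset.range n → T' ⊆ Finset.range n →
      code T = code T' → T ⊆ T' := by
    intro T T' hT hT' hc s hs
    by_contra hs'
    have hgp : gp T = gp T' := by
      funext i
      have h1 : SublacunaryAux.box Q hQ0 (α T i) = SublacunaryAux.box Q hQ0 (α T' i) :=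
        congrFun (congrArg Prod.fst hc) i
      simp only [hgpdef, h1]
    have himg : (fun i : Fin d => SublacunaryAux.box M hM0 ((r s : ℕ) • gp T i)) ∈
        T'.image (fun s => fun i : Fin d =>
          SublacunaryAux.box M hM0 ((r s : ℕ) • gp T' i)) := by
      have hmem : (fun i : Fin d => SublacunaryAux.box M hM0 ((r s : ℕ) • gp T i)) ∈
          T.image (fun s => fun i : Fin d =>
            SublacunaryAux.box M hM0 ((r s : ℕ) • gp T i)) :=
        Finset.mem_image_of_mem _ hs
      have h2 := congrArg Prod.snd hc
      simp only [hcodedef] at h2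
      rwa [h2] at hmem
    obtain ⟨a', ha', hfa⟩ := Finset.mem_image.mp himg
    have hboxes : ∀ i, SublacunaryAux.box M hM0 ((r a' : ℕ) • gp T' i)
        = SublacunaryAux.box M hM0 ((r s : ℕ) • gp T' i) := by
      intro i
      have h3 := congrFun hfa i
      rw [← hgp] at h3 ⊢
      exact h3
    have hsB : s ∈ Finset.range n \ T' := Finset.mem_sdiff.mpr ⟨hT hs, hs'⟩
    have hsepTT' : ε ≤ dist ((r a' : ℕ) • α T') ((r s : ℕ) • α T') :=
      hα T' hT' (r a') (Finset.mem_image_of_mem r ha') (r s) (Finset.mem_image_of_mem r hsB)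
    have htri : dist ((r a' : ℕ) • α T') ((r s : ℕ) • α T') ≤
        dist ((r a' : ℕ) • α T') ((r a' : ℕ) • gp T') +
        dist ((r a' : ℕ) • gp T') ((r s : ℕ) • gp T') +
        dist ((r s : ℕ) • gp T') ((r s : ℕ) • α T') := dist_triangle4 _ _ _ _
    have e1 := est1 T' a' (hT' ha')
    have e2 := est2 (gp T') (r a') (r s) hboxes
    have e3 : dist ((r s : ℕ) • gp T') ((r s : ℕ) • α T') ≤ ε/4 := by
      rw [dist_comm]; exact est1 T' s (hT hs)
    linarith
  have inj : Set.InjOn code ↑(Finset.range n).powerset := by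
    intro T hT T' hT' hc
    have hT1 : T ⊆ Finset.range n := Finset.mem_powerset.mp (Finset.mem_coe.mp hT)
    have hT2 : T' ⊆ Finset.range n := Finset.mem_powerset.mp (Finset.mem_coe.mp hT')
    exact Finset.Subset.antisymm (key T T' hT1 hT2 hc) (key T' T hT2 hT1 hc.symm)
  have hle := Finset.card_le_card_of_injOn code
    (fun T _ => Finset.mem_univ (code T)) inj
  rw [Finset.card_powerset, Finset.card_range, Finset.card_univ] at hle
  have hcardeq : Fintype.card ((Fin d → Fin Q) × Finset (Fin d → Fin M)) = Q^d * 2^(M^d) := by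
    rw [Fintype.card_prod, Fintype.card_fun, Fintype.card_finset, Fintype.card_fun]
    simp [Fintype.card_fin]
  rw [hcardeq] at hle
  omega
end
end
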